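/- arXiv:1205.6128 — 4 statements merged into one kernel-verified Lean document; each statement's English description precedes it below -/
import Mathlib

section
/- For a ≥ 1 and any partition λ with a + |λ| = n, one has ⟨C_a s_λ, e_n⟩ = 1 if a = 1 and λ = (1^{n-1}), and 0 otherwise. -/
open MvPolynomial

noncomputable section

/-- The coefficient field `ℚ(q,t)`. -/
abbrev F : Type := FractionRing (MvPolynomial (Fin 2) ℚ)

def q : F := algebraMap (MvPolynomial (Fin 2) ℚ) F (X 0)
def t : F := algebraMap (MvPolynomial (Fin 2) ℚ) F (X 1)

/-- The ring of symmetric functions over `ℚ(q,t)`, presented as the polynomial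
ring in the power sums `p₁, p₂, …`; the variable `i` represents `p_{i+1}`. -/
abbrev SymF : Type := MvPolynomial ℕ F

/-- The power sum `p_k` (for `k ≥ 1`). -/
def pSym (k : ℕ) : SymF := X (k - 1)

/-- `p_μ = p_{μ₁} ⋯ p_{μ_k}`. -/
def pProd {n : ℕ} (μ : n.Partition) : SymF := (μ.parts.map pSym).prod

/-- `z_μ = ∏ μᵢ ⋅ ∏_k m_k!`. -/
def zstat {n : ℕ} (μ : n.Partition) : ℚ :=
  (μ.parts.prod : ℕ) * ∏ k ∈ μ.parts.toFinset, (Nat.factorial (μ.parts.count k))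

/-- The complete homogeneous symmetric function `h_n = Σ_{μ⊢n} p_μ / z_μ`. -/
def hSym (n : ℕ) : SymF := ∑ μ : n.Partition, ((zstat μ : F))⁻¹ • pProd μ

/-- The elementary symmetric function `e_n = Σ_{μ⊢n} (-1)^{n-ℓ(μ)} p_μ / z_μ`. -/
def eSym (n : ℕ) : SymF :=
  ∑ μ : n.Partition, ((-1 : F) ^ (n - Multiset.card μ.parts) * (zstat μ : F)⁻¹) • pProd μ

/-- `h_m` for an integer index, vanishing for negative `m`. -/
def hZ (m : ℤ) : SymF := if m < 0 then 0 else hSym m.toNat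

/-- The Schur function of a (weakly decreasing) list of parts, via the Jacobi–Trudi
determinant `s_λ = det(h_{λ_i - i + j})`. -/
def schurOf (l : List ℕ) : SymF :=
  Matrix.det (Matrix.of fun i j : Fin l.length => hZ ((l.get i : ℤ) - (i : ℤ) + (j : ℤ)))

/-- The Schur function of a partition. -/
def schur {n : ℕ} (μ : n.Partition) : SymF := schurOf (μ.parts.sort (· ≥ ·))

/-- `i`-th row length (0-indexed) of the partition `μ`. -/
def rowLen {n : ℕ} (μ : n.Partition) (i : ℕ) : ℕ := (μ.parts.sort (· ≥ ·)).getD i 0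

/-- `j`-th column length (0-indexed) of `μ`, i.e. the row lengths of the conjugate. -/
def colLen {n : ℕ} (μ : n.Partition) (j : ℕ) : ℕ :=
  ((Finset.range n).filter fun i => j < rowLen μ i).card

/-- The cells of the (French) Ferrers diagram of `μ`, as pairs
`(row, column) = (coleg, coarm)`, 0-indexed. -/
def cells {n : ℕ} (μ : n.Partition) : Finset (ℕ × ℕ) :=
  (Finset.range n ×ˢ Finset.range n).filter fun c => c.2 < rowLen μ c.1

def armLen {n : ℕ} (μ : n.Partition) (c : ℕ × ℕ) : ℕ := rowLen μ c.1 - c.2 - 1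
def legLen {n : ℕ} (μ : n.Partition) (c : ℕ × ℕ) : ℕ := colLen μ c.2 - c.1 - 1

/-- `B_μ(q^k, t^k) = Σ_{c∈μ} t^{k l'(c)} q^{k a'(c)}`. -/
def Bmu {n : ℕ} (μ : n.Partition) (k : ℕ) : F :=
  ∑ c ∈ cells μ, t ^ (k * c.1) * q ^ (k * c.2)

/-- `M` evaluated with `q,t` raised to the `k`-th power: `(1-t^k)(1-q^k)`. -/
def Mk (k : ℕ) : F := (1 - t ^ k) * (1 - q ^ k)

/-- `n(μ) = Σ_c l'(c)`. -/
def nstat {n : ℕ} (μ : n.Partition) : ℕ := ∑ c ∈ cells μ, c.1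
/-- `n(μ') = Σ_c a'(c)`. -/
def nstat' {n : ℕ} (μ : n.Partition) : ℕ := ∑ c ∈ cells μ, c.2

/-- `T_μ = t^{n(μ)} q^{n(μ')}`. -/
def Tstat {n : ℕ} (μ : n.Partition) : F := t ^ nstat μ * q ^ nstat' μ

/-- `Π_μ = ∏_{c∈μ, c≠(0,0)} (1 - t^{l'} q^{a'})`. -/
def PiStat {n : ℕ} (μ : n.Partition) : F :=
  ∏ c ∈ (cells μ).erase (0, 0), (1 - t ^ c.1 * q ^ c.2)

/-- `w_μ = ∏_{c∈μ} (q^a - t^{l+1})(t^l - q^{a+1})`. -/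
def wstat {n : ℕ} (μ : n.Partition) : F :=
  ∏ c ∈ cells μ, (q ^ armLen μ c - t ^ (legLen μ c + 1)) *
    (t ^ legLen μ c - q ^ (armLen μ c + 1))

/-- Plethysm `F[cX]`, rescaling each power sum: `p_k ↦ c(k)·p_k`. -/
def plethMul (c : ℕ → F) : SymF →ₐ[F] SymF :=
  aeval (fun i => c (i + 1) • (X i : SymF))

/-- Plethystic evaluation sending each `p_k` to `c k` in an `F`-algebra `A`. -/
def plethEval {A : Type*} [CommRing A] [Algebra F A] (c : ℕ → A) : SymF →ₐ[F] A :=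
  aeval (fun i => c (i + 1))

/-- The fundamental involution `ω : p_k ↦ (-1)^{k-1} p_k`. -/
def omegaSym : SymF →ₐ[F] SymF := plethMul (fun k => (-1 : F) ^ (k - 1))

/-- `z`-statistic of a power-sum monomial `d` (where `d i` is the exponent of `p_{i+1}`). -/
def zMon (d : ℕ →₀ ℕ) : F :=
  ∏ k ∈ d.support, ((k + 1 : ℕ) : F) ^ d k * (Nat.factorial (d k) : F)

/-- The Hall scalar product, `⟨p_λ, p_μ⟩ = z_μ δ_{λμ}`. -/
def hall (f g : SymF) : F := ∑ d ∈ f.support, coeff d f * coeff d g * zMon d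

/-- The star-deformation factor for a power-sum monomial. -/
def zMonStar (d : ℕ →₀ ℕ) : F :=
  (-1 : F) ^ (∑ k ∈ d.support, k * d k) *
    ∏ k ∈ d.support, ((1 - t ^ (k + 1)) * (1 - q ^ (k + 1))) ^ d k * zMon d

/-- The star scalar product
`⟨p_λ, p_μ⟩_* = (-1)^{|μ|-ℓ(μ)} ∏ (1-t^{μ_i})(1-q^{μ_i}) z_μ δ_{λμ}`. -/
def starP (f g : SymF) : F := ∑ d ∈ f.support, coeff d f * coeff d g * zMonStar d

/-- Dominance order: `ν ⊴ λ` (`λ` dominates `ν`). -/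
def Dominates {n : ℕ} (ν lam : n.Partition) : Prop :=
  ∀ i, ∑ j ∈ Finset.range i, rowLen ν j ≤ ∑ j ∈ Finset.range i, rowLen lam j

/-- `λ` dominates the conjugate of `μ`. -/
def DominatesConj {n : ℕ} (μ lam : n.Partition) : Prop :=
  ∀ i, ∑ j ∈ Finset.range i, colLen μ j ≤ ∑ j ∈ Finset.range i, rowLen lam j

open Classical in
/-- The defining axioms of the modified Macdonald basis `{H̃_μ}_{μ⊢n}`:
`H̃_μ[X(q-1)] ∈ span{s_λ : λ ⪰ μ}`, `H̃_μ[X(t-1)] ∈ span{s_λ : λ ⪰ μ'}`, and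
`⟨H̃_μ, s_{(n)}⟩ = 1`. -/
def MacAxioms (n : ℕ) (H : n.Partition → SymF) : Prop :=
  ∀ μ : n.Partition,
    (∃ c : n.Partition → F,
      plethMul (fun k => q ^ k - 1) (H μ) =
        ∑ lam : n.Partition, (if Dominates μ lam then c lam else 0) • schur lam) ∧
    (∃ c : n.Partition → F,
      plethMul (fun k => t ^ k - 1) (H μ) =
        ∑ lam : n.Partition, (if DominatesConj μ lam then c lam else 0) • schur lam) ∧
    hall (H μ) (hSym n) = 1

open Classical in
/-- The modified Macdonald polynomial `H̃_μ[X;q,t]`. -/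
def Htilde (n : ℕ) : n.Partition → SymF :=
  if h : ∃ H : n.Partition → SymF, MacAxioms n H then h.choose else fun _ => 0

/-- The Macdonald eigenoperator `Δ_G`, acting on the homogeneous component of
degree `n` (`Δ_G H̃_μ = G[B_μ] H̃_μ`, extended using the `H̃`-expansion computed
via the star scalar product). -/
def Delta (G : SymF) (n : ℕ) (P : SymF) : SymF :=
  ∑ μ : n.Partition,
    (starP P (Htilde n μ) / wstat μ) •
      ((plethEval (fun k => Bmu μ k) G : F) • Htilde n μ)

/-- Weighted (plethystic) degree of a symmetric function. -/
def wdeg (G : SymF) : ℕ := weightedTotalDegree (fun i => i + 1) G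

/-- `G[X - c·y] ∈ Λ[y]`, where `p_k[X - c·y] = p_k - c_k y^k`. -/
def subY (c : ℕ → F) : SymF →ₐ[F] Polynomial SymF :=
  aeval (fun i => Polynomial.C (X i : SymF) -
    (algebraMap F (Polynomial SymF) (c (i + 1))) * Polynomial.X ^ (i + 1))

/-- The operator `C_a`:
`C_a G = (-1/q)^{a-1} G[X - (1-1/q)/z] Σ_m z^m h_m[X] |_{z^a}`. -/
def Cop (a : ℕ) (G : SymF) : SymF :=
  (-q⁻¹) ^ (a - 1) •
    ∑ j ∈ Finset.range (wdeg G + 1),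
      Polynomial.coeff (subY (fun k => 1 - (q⁻¹) ^ k) G) j * hSym (a + j)

/-- The operator `B̃_a`: `B̃_a G = G[X - (1-q)/z] Ω[zX] |_{z^a}`. -/
def Btilde (a : ℕ) (G : SymF) : SymF :=
  ∑ j ∈ Finset.range (wdeg G + 1),
    Polynomial.coeff (subY (fun k => 1 - q ^ k) G) j * hSym (a + j)

/-- The operator `B_a = ω B̃_a ω`. -/
def Bop (a : ℕ) (G : SymF) : SymF := omegaSym (Btilde a (omegaSym G))

/-- `C_{p_1} C_{p_2} ⋯ C_{p_k} 1`. -/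
def CWord (p : List ℕ) : SymF := p.foldr Cop 1

/-- The star-adjoint `C*_a P = (-1/q)^{a-1} P[X - εM/z] Ω[-εzX/(q(1-t))]|_{z^{-a}}`. -/
def Cstar (a : ℕ) (P : SymF) : SymF :=
  (-q⁻¹) ^ (a - 1) •
    ∑ m ∈ Finset.range (wdeg P + 1),
      Polynomial.coeff (subY (fun k => (-1 : F) ^ k * Mk k) P) (a + m) *
        plethMul (fun k => (-1 : F) ^ (k - 1) * (q ^ k * (1 - t ^ k))⁻¹) (hSym m)

/-- The star-adjoint `B*_a P = P[X + M/z] Ω[-zX/(1-t)]|_{z^{-a}}`. -/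
def Bstar (a : ℕ) (P : SymF) : SymF :=
  ∑ m ∈ Finset.range (wdeg P + 1),
    Polynomial.coeff (subY (fun k => -Mk k) P) (a + m) *
      plethMul (fun k => -(1 - t ^ k)⁻¹) (hSym m)

section CopAux
open Finset

lemma card_le_sum' {s : Multiset ℕ} (h : ∀ x ∈ s, 1 ≤ x) : Multiset.card s ≤ s.sum := by
  induction s using Multiset.induction_on with
  | empty => simp
  | cons a s ih =>
    simp only [Multiset.card_cons, Multiset.sum_cons]
    have h1 := h a (Multiset.mem_cons_self a s)
    have h2 := ih (fun x hx => h x (Multiset.mem_cons_of_mem hx))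
    omega

lemma prod_map_pow_pred {M : Type*} [CommMonoid M] (r : M) (s : Multiset ℕ)
    (h : ∀ x ∈ s, 1 ≤ x) :
    (s.map fun k => r ^ (k - 1)).prod = r ^ (s.sum - Multiset.card s) := by
  induction s using Multiset.induction_on with
  | empty => simp
  | cons a s ih =>
    have ha := h a (Multiset.mem_cons_self a s)
    have hs : ∀ x ∈ s, 1 ≤ x := fun x hx => h x (Multiset.mem_cons_of_mem hx)
    have hcs := card_le_sum' hs
    rw [Multiset.map_cons, Multiset.prod_cons, Multiset.sum_cons, Multiset.card_cons, ih hs,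
      ← pow_add]
    congr 1
    omega

lemma prod_map_pow' {M : Type*} [CommMonoid M] (b : M) (s : Multiset ℕ) :
    (s.map fun k => b ^ k).prod = b ^ s.sum := by
  induction s using Multiset.induction_on with
  | empty => simp
  | cons a s ih => rw [Multiset.map_cons, Multiset.prod_cons, Multiset.sum_cons, ih, pow_add]

/-- `z` statistic at the level of multisets, in `ℕ`. -/
def zN (s : Multiset ℕ) : ℕ := s.prod * ∏ j ∈ s.toFinset, (s.count j).factorial

lemma zstat_eq {n : ℕ} (μ : n.Partition) : zstat μ = ((zN μ.parts : ℕ) : ℚ) := by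
  unfold zstat zN
  push_cast
  ring

lemma zN_pos {s : Multiset ℕ} (h : ∀ x ∈ s, 0 < x) : 0 < zN s := by
  unfold zN
  apply Nat.mul_pos
  · exact Multiset.prod_pos h
  · exact Finset.prod_pos fun j _ => Nat.factorial_pos _

lemma zstat_pos {n : ℕ} (μ : n.Partition) : 0 < zstat μ := by
  rw [zstat_eq]
  exact_mod_cast zN_pos fun x hx => μ.parts_pos hx

lemma zstat_ne_zero {n : ℕ} (μ : n.Partition) : zstat μ ≠ 0 := (zstat_pos μ).ne'

lemma prod_toFinset_factorial_cons (k : ℕ) (P : Multiset ℕ) :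
    ∏ j ∈ (k ::ₘ P).toFinset, ((k ::ₘ P).count j).factorial
      = (P.count k + 1) * ∏ j ∈ P.toFinset, (P.count j).factorial := by
  classical
  rw [Multiset.toFinset_cons, ← Finset.mul_prod_erase _ _ (Finset.mem_insert_self k _),
    Finset.erase_insert_eq_erase, Multiset.count_cons_self]
  have hP : ∏ j ∈ P.toFinset, (P.count j).factorial
      = (P.count k).factorial * ∏ j ∈ P.toFinset.erase k, (P.count j).factorial := by
    by_cases hk : k ∈ P.toFinset
    · rw [← Finset.mul_prod_erase _ _ hk]
    · rw [Finset.erase_eq_of_notMem hk]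
      have : P.count k = 0 := by
        simpa [Multiset.mem_toFinset] using (Multiset.count_eq_zero.2 (by
          simpa [Multiset.mem_toFinset] using hk))
      rw [this]
      simp [Nat.factorial]
  rw [hP]
  have herase : ∀ j ∈ P.toFinset.erase k, ((k ::ₘ P).count j).factorial = (P.count j).factorial := by
    intro j hj
    rw [Multiset.count_cons_of_ne (Finset.ne_of_mem_erase hj)]
  rw [Finset.prod_congr rfl herase, Nat.factorial_succ]
  ring

lemma zN_cons (k : ℕ) (P : Multiset ℕ) :
    zN (k ::ₘ P) = (k * (k ::ₘ P).count k) * zN P := by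
  unfold zN
  rw [Multiset.prod_cons, prod_toFinset_factorial_cons, Multiset.count_cons_self]
  ring

/-- Remove one copy of the part `j` from a partition of `N` (junk value if `j` is
not a part). -/
def remP (N j : ℕ) (μ : N.Partition) : (N - j).Partition :=
  if h : j ∈ μ.parts then
    { parts := μ.parts.erase j
      parts_pos := fun hi => μ.parts_pos (Multiset.mem_of_mem_erase hi)
      parts_sum := by
        have hc : j ::ₘ μ.parts.erase j = μ.parts := Multiset.cons_erase h
        have h2 := congrArg Multiset.sum hc
        rw [Multiset.sum_cons, μ.parts_sum] at h2
        omega }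
  else Nat.Partition.indiscrete _

lemma remP_parts {N j : ℕ} (μ : N.Partition) (h : j ∈ μ.parts) :
    (remP N j μ).parts = μ.parts.erase j := by
  unfold remP; rw [dif_pos h]

/-- Add the part `k` to a partition of `N - k` (junk value unless `1 ≤ k ≤ N`). -/
def insP (N k : ℕ) (ν : (N - k).Partition) : N.Partition :=
  if h : 1 ≤ k ∧ k ≤ N then
    { parts := k ::ₘ ν.parts
      parts_pos := by
        intro i hi
        rcases Multiset.mem_cons.mp hi with rfl | hi
        · exact h.1
        · exact ν.parts_pos hi
      parts_sum := by rw [Multiset.sum_cons, ν.parts_sum]; omega }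
  else Nat.Partition.indiscrete N

lemma insP_parts {N k : ℕ} (ν : (N - k).Partition) (h1 : 1 ≤ k) (h2 : k ≤ N) :
    (insP N k ν).parts = k ::ₘ ν.parts := by
  unfold insP; rw [dif_pos ⟨h1, h2⟩]

/-- The sum `∑_{μ ⊢ M} (∏_{k ∈ μ} x k) / z_μ`. -/
def UU (x : ℕ → ℚ) (M : ℕ) : ℚ := ∑ μ : M.Partition, (μ.parts.map x).prod / zstat μ

lemma UU_zero (x : ℕ → ℚ) : UU x 0 = 1 := by
  unfold UU
  rw [Finset.univ_unique, Finset.sum_singleton]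
  have h0 : (default : Nat.Partition 0).parts = 0 := Nat.Partition.partition_zero_parts _
  rw [zstat_eq, h0]
  simp [zN]

lemma newton_rec (x : ℕ → ℚ) (N : ℕ) :
    (N : ℚ) * UU x N = ∑ k ∈ Finset.Icc 1 N, x k * UU x (N - k) := by
  unfold UU
  rw [Finset.mul_sum]
  have lhs : ∀ μ : N.Partition, (N : ℚ) * ((μ.parts.map x).prod / zstat μ)
      = ∑ j ∈ μ.parts.toFinset, ((μ.parts.count j * j : ℕ) : ℚ)
          * ((μ.parts.map x).prod / zstat μ) := by
    intro μ
    rw [← Finset.sum_mul]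
    congr 1
    have hthis : ∑ j ∈ μ.parts.toFinset, Multiset.count j μ.parts * j = N := by
      have h1 := Finset.sum_multiset_map_count μ.parts (id : ℕ → ℕ)
      simp only [Multiset.map_id, smul_eq_mul, id] at h1
      rw [← h1]
      simpa using μ.parts_sum
    exact_mod_cast hthis.symm
  rw [Finset.sum_congr rfl (fun μ _ => lhs μ)]
  have rhs : ∀ k ∈ Finset.Icc 1 N, x k * (∑ ν : (N - k).Partition, ((ν.parts.map x).prod / zstat ν))
      = ∑ ν : (N - k).Partition, x k * ((ν.parts.map x).prod / zstat ν) := by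
    intro k _; rw [Finset.mul_sum]
  rw [Finset.sum_congr rfl rhs, Finset.sum_sigma', Finset.sum_sigma']
  refine Finset.sum_nbij' (fun p => ⟨p.2, remP N p.2 p.1⟩)
    (fun p => ⟨insP N p.1 p.2, p.1⟩) ?_ ?_ ?_ ?_ ?_
  · rintro ⟨μ, j⟩ hp
    have hj : j ∈ μ.parts := Multiset.mem_toFinset.mp (Finset.mem_sigma.mp hp).2
    refine Finset.mem_sigma.mpr ⟨Finset.mem_Icc.mpr ⟨μ.parts_pos hj, ?_⟩, Finset.mem_univ _⟩
    calc j ≤ μ.parts.sum := Multiset.single_le_sum (fun x _ => Nat.zero_le x) j hj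
    _ = N := μ.parts_sum
  · rintro ⟨k, ν⟩ hp
    obtain ⟨hk1, hk2⟩ := Finset.mem_Icc.mp (Finset.mem_sigma.mp hp).1
    refine Finset.mem_sigma.mpr ⟨Finset.mem_univ _, ?_⟩
    rw [Multiset.mem_toFinset, insP_parts ν hk1 hk2]
    exact Multiset.mem_cons_self _ _
  · rintro ⟨μ, j⟩ hp
    have hj : j ∈ μ.parts := Multiset.mem_toFinset.mp (Finset.mem_sigma.mp hp).2
    have h1 : 1 ≤ j := μ.parts_pos hj
    have h2 : j ≤ N := by
      calc j ≤ μ.parts.sum := Multiset.single_le_sum (fun x _ => Nat.zero_le x) j hj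
      _ = N := μ.parts_sum
    have : insP N j (remP N j μ) = μ := by
      apply Nat.Partition.ext
      rw [insP_parts _ h1 h2, remP_parts μ hj, Multiset.cons_erase hj]
    simp [this]
  · rintro ⟨k, ν⟩ hp
    obtain ⟨hk1, hk2⟩ := Finset.mem_Icc.mp (Finset.mem_sigma.mp hp).1
    have hk : k ∈ (insP N k ν).parts := by
      rw [insP_parts ν hk1 hk2]; exact Multiset.mem_cons_self _ _
    have : remP N k (insP N k ν) = ν := by
      apply Nat.Partition.ext
      rw [remP_parts _ hk, insP_parts ν hk1 hk2, Multiset.erase_cons_head]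
    simp [this]
  · rintro ⟨μ, j⟩ hp
    have hj : j ∈ μ.parts := Multiset.mem_toFinset.mp (Finset.mem_sigma.mp hp).2
    have hparts : μ.parts = j ::ₘ (remP N j μ).parts := by
      rw [remP_parts μ hj, Multiset.cons_erase hj]
    have hz : zstat μ = ((j * μ.parts.count j : ℕ) : ℚ) * zstat (remP N j μ) := by
      rw [zstat_eq, zstat_eq, hparts, zN_cons, ← hparts]
      push_cast; ring
    have hw : (μ.parts.map x).prod = x j * ((remP N j μ).parts.map x).prod := by
      rw [hparts, Multiset.map_cons, Multiset.prod_cons]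
    have hcount : 0 < μ.parts.count j := Multiset.count_pos.mpr hj
    have hjpos : 0 < j := μ.parts_pos hj
    have hzν := zstat_ne_zero (remP N j μ)
    rw [hz, hw]
    have hjQ : ((j : ℕ) : ℚ) ≠ 0 := by exact_mod_cast hjpos.ne'
    have hcQ : ((μ.parts.count j : ℕ) : ℚ) ≠ 0 := by exact_mod_cast hcount.ne'
    push_cast
    field_simp
/-- The sign specialization `x_k = (-1)^{k-1}`. -/
def xe : ℕ → ℚ := fun k => (-1 : ℚ) ^ (k - 1)

lemma UU_xe : ∀ N : ℕ, UU xe N = if N ≤ 1 then 1 else 0 := by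
  intro N
  induction N using Nat.strong_induction_on with
  | _ N ih =>
    match N, ih with
    | 0, _ => simpa using UU_zero xe
    | 1, _ =>
      have h := newton_rec xe 1
      rw [Finset.Icc_self, Finset.sum_singleton] at h
      norm_num [UU_zero, xe] at h
      simpa using h
    | (N+2), ih =>
      have h := newton_rec xe (N+2)
      have hsub : ({N+1, N+2} : Finset ℕ) ⊆ Finset.Icc 1 (N+2) := by
        intro k hk
        simp only [Finset.mem_insert, Finset.mem_singleton] at hk
        rcases hk with rfl | rfl <;> exact Finset.mem_Icc.mpr ⟨by omega, by omega⟩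
      have hzero : ∀ k ∈ Finset.Icc 1 (N+2), k ∉ ({N+1, N+2} : Finset ℕ) →
          xe k * UU xe (N+2-k) = 0 := by
        intro k hk hnk
        obtain ⟨hk1, hk2⟩ := Finset.mem_Icc.mp hk
        simp only [Finset.mem_insert, Finset.mem_singleton] at hnk
        rw [ih (N+2-k) (by omega), if_neg (by omega)]
        ring
      rw [← Finset.sum_subset hsub hzero, Finset.sum_pair (by omega : N+1 ≠ N+2)] at h
      have e1 : N + 2 - (N + 1) = 1 := by omega
      have e2 : N + 2 - (N + 2) = 0 := by omega
      rw [e1, e2, ih 1 (by omega), ih 0 (by omega)] at h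
      norm_num [xe] at h
      have h2 : ((N:ℚ)+2) * UU xe (N+2) = 0 := by rw [h, pow_succ]; ring
      rw [if_neg (by omega)]
      rcases mul_eq_zero.mp h2 with h' | h'
      · exfalso
        have : (0:ℚ) < (N:ℚ) + 2 := by positivity
        rw [h'] at this
        exact lt_irrefl _ this
      · exact h'
/-- Exponent vector of the power-sum monomial `p_μ`. -/
def dOf {n : ℕ} (μ : n.Partition) : ℕ →₀ ℕ := Multiset.toFinsupp (μ.parts.map (· - 1))

/-- weighted degree of a power-sum monomial. -/
def wtF (d : ℕ →₀ ℕ) : ℕ := d.sum fun i e => (i + 1) * e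
/-- number of parts of a power-sum monomial. -/
def elF (d : ℕ →₀ ℕ) : ℕ := d.sum fun _ e => e

lemma pProd_monomial (s : Multiset ℕ) :
    (s.map pSym).prod = monomial (Multiset.toFinsupp (s.map (· - 1))) (1 : F) := by
  induction s using Multiset.induction_on with
  | empty => simp
  | cons a s ih =>
    rw [Multiset.map_cons, Multiset.prod_cons, ih, Multiset.map_cons,
      ← Multiset.singleton_add, Multiset.toFinsupp_add, Multiset.toFinsupp_singleton]
    show (X (a-1) : SymF) * _ = _
    have hX : (X (a-1) : SymF) = monomial (Finsupp.single (a-1) 1) 1 := rfl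
    rw [hX, MvPolynomial.monomial_mul, one_mul]

lemma pProd_eq {n : ℕ} (μ : n.Partition) : pProd μ = monomial (dOf μ) (1 : F) :=
  pProd_monomial _

lemma parts_map_sub_add {n : ℕ} (μ : n.Partition) :
    (μ.parts.map (· - 1)).map (· + 1) = μ.parts := by
  rw [Multiset.map_map]
  conv_rhs => rw [← Multiset.map_id μ.parts]
  apply Multiset.map_congr rfl
  intro x hx
  have := μ.parts_pos hx
  simp only [Function.comp, id]
  omega

lemma dOf_inj {n : ℕ} : Function.Injective (dOf (n := n)) := by
  intro μ ν h
  apply Nat.Partition.ext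
  have h2 : μ.parts.map (· - 1) = ν.parts.map (· - 1) := Multiset.toFinsupp.injective h
  calc μ.parts = (μ.parts.map (· - 1)).map (· + 1) := (parts_map_sub_add μ).symm
  _ = (ν.parts.map (· - 1)).map (· + 1) := by rw [h2]
  _ = ν.parts := parts_map_sub_add ν

lemma elF_dOf {n : ℕ} (μ : n.Partition) : elF (dOf μ) = Multiset.card μ.parts := by
  have h1 : elF (dOf μ) = ∑ k ∈ (μ.parts.map (· - 1)).toFinset,
      (μ.parts.map (· - 1)).count k := rfl
  rw [h1, Multiset.toFinset_sum_count_eq, Multiset.card_map]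

lemma wtF_dOf {n : ℕ} (μ : n.Partition) : wtF (dOf μ) = n := by
  have h1 : wtF (dOf μ) = ∑ k ∈ (μ.parts.map (· - 1)).toFinset,
      (k + 1) * (μ.parts.map (· - 1)).count k := rfl
  have h2 := Finset.sum_multiset_map_count (μ.parts.map (· - 1)) (fun k => k + 1)
  rw [parts_map_sub_add] at h2
  simp only [smul_eq_mul] at h2
  have h3 := μ.parts_sum
  rw [h2] at h3
  rw [h1]
  simpa [mul_comm] using h3

lemma zMon_dOf {n : ℕ} (μ : n.Partition) : zMon (dOf μ) = ((zstat μ : ℚ) : F) := by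
  rw [zstat_eq, Rat.cast_natCast]
  unfold zMon zN
  have hsupp : (dOf μ).support = (μ.parts.map (· - 1)).toFinset := rfl
  have happ : ∀ k, dOf μ k = (μ.parts.map (· - 1)).count k := fun k => rfl
  rw [hsupp]
  simp only [happ]
  have hparts : μ.parts = (μ.parts.map (· - 1)).map (· + 1) := (parts_map_sub_add μ).symm
  have hinj : Function.Injective (· + 1 : ℕ → ℕ) := fun a b h => by simpa using h
  have hcount : ∀ k, μ.parts.count (k + 1) = (μ.parts.map (· - 1)).count k := by
    intro k
    conv_lhs => rw [hparts]
    exact Multiset.count_map_eq_count' _ _ hinj _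
  have hprod : μ.parts.prod = ∏ k ∈ (μ.parts.map (· - 1)).toFinset,
      (k + 1) ^ (μ.parts.map (· - 1)).count k := by
    conv_lhs => rw [hparts]
    rw [Finset.prod_multiset_map_count]
  have hfact : ∏ j ∈ μ.parts.toFinset, (μ.parts.count j).factorial
      = ∏ k ∈ (μ.parts.map (· - 1)).toFinset, ((μ.parts.map (· - 1)).count k).factorial := by
    have hfin : μ.parts.toFinset = (μ.parts.map (· - 1)).toFinset.image (· + 1) := by
      conv_lhs => rw [hparts]
      rw [Multiset.toFinset_map]
    rw [hfin, Finset.prod_image (fun a _ b _ h => hinj h)]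
    exact Finset.prod_congr rfl fun k _ => by rw [hcount]
  rw [hprod, hfact]
  push_cast
  rw [← Finset.prod_mul_distrib]

lemma coeff_eSym_dOf {n : ℕ} (μ : n.Partition) :
    coeff (dOf μ) (eSym n) = (-1 : F) ^ (n - Multiset.card μ.parts) * (zstat μ : F)⁻¹ := by
  unfold eSym
  rw [MvPolynomial.coeff_sum, Finset.sum_eq_single μ]
  · rw [MvPolynomial.coeff_smul, pProd_eq, MvPolynomial.coeff_monomial, if_pos rfl,
      smul_eq_mul, mul_one]
  · intro ν _ hne
    rw [MvPolynomial.coeff_smul, pProd_eq, MvPolynomial.coeff_monomial,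
      if_neg (fun h => hne (dOf_inj h)), smul_eq_mul, mul_zero]
  · intro h; exact absurd (Finset.mem_univ μ) h

lemma coeff_eSym_zero {n : ℕ} (d : ℕ →₀ ℕ) (hd : ∀ μ : n.Partition, dOf μ ≠ d) :
    coeff d (eSym n) = 0 := by
  unfold eSym
  rw [MvPolynomial.coeff_sum]
  apply Finset.sum_eq_zero
  intro ν _
  rw [MvPolynomial.coeff_smul, pProd_eq, MvPolynomial.coeff_monomial, if_neg (hd ν),
    smul_eq_mul, mul_zero]

lemma hall_right (f g : SymF) :
    hall f g = ∑ d ∈ g.support, coeff d f * coeff d g * zMon d := by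
  unfold hall
  have h1 : ∑ d ∈ f.support, coeff d f * coeff d g * zMon d
      = ∑ d ∈ f.support ∪ g.support, coeff d f * coeff d g * zMon d := by
    apply Finset.sum_subset Finset.subset_union_left
    intro d _ hd
    rw [MvPolynomial.notMem_support_iff.mp hd, zero_mul, zero_mul]
  have h2 : ∑ d ∈ g.support, coeff d f * coeff d g * zMon d
      = ∑ d ∈ f.support ∪ g.support, coeff d f * coeff d g * zMon d := by
    apply Finset.sum_subset Finset.subset_union_right
    intro d _ hd
    rw [MvPolynomial.notMem_support_iff.mp hd, mul_zero, zero_mul]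
  rw [h1, ← h2]

lemma exists_dOf {n : ℕ} (d : ℕ →₀ ℕ) (hd : wtF d = n) : ∃ μ : n.Partition, dOf μ = d := by
  refine ⟨⟨(Finsupp.toMultiset d).map (· + 1), ?_, ?_⟩, ?_⟩
  · intro i hi
    obtain ⟨x, -, rfl⟩ := Multiset.mem_map.mp hi
    omega
  · rw [Finset.sum_multiset_map_count, Finsupp.toFinset_toMultiset]
    simp only [Finsupp.count_toMultiset, smul_eq_mul]
    rw [← hd]
    unfold wtF
    rw [Finsupp.sum]
    exact Finset.sum_congr rfl fun k _ => by ring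
  · show Multiset.toFinsupp (((Finsupp.toMultiset d).map (· + 1)).map (· - 1)) = d
    rw [Multiset.map_map]
    have hid : ((· - 1) ∘ (· + 1) : ℕ → ℕ) = id := by funext x; simp
    rw [hid, Multiset.map_id, Finsupp.toMultiset_toFinsupp]
/-- The specialization `p_k ↦ (-1)^{k-1} z^k`, as an algebra map to `F[z]`. -/
def phiz : SymF →ₐ[F] Polynomial F :=
  aeval (fun i => Polynomial.C ((-1 : F) ^ i) * Polynomial.X ^ (i + 1))

lemma phiz_pSym (k : ℕ) (hk : 1 ≤ k) :
    phiz (pSym k) = Polynomial.C ((-1 : F) ^ (k - 1)) * Polynomial.X ^ k := by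
  unfold phiz pSym
  rw [aeval_X]
  have h : k - 1 + 1 = k := by omega
  rw [h]

lemma phiz_pProd {N : ℕ} (μ : N.Partition) :
    phiz (pProd μ)
      = Polynomial.C ((-1 : F) ^ (N - Multiset.card μ.parts)) * Polynomial.X ^ N := by
  unfold pProd
  rw [map_multiset_prod, Multiset.map_map,
    Multiset.map_congr rfl (fun k hk => by
      simpa using phiz_pSym k (μ.parts_pos hk)),
    Multiset.prod_map_mul, prod_map_pow_pred _ _ (fun x hx => μ.parts_pos hx),
    prod_map_pow', μ.parts_sum]
  simp

lemma phiz_hSym (N : ℕ) :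
    phiz (hSym N) = Polynomial.C ((UU xe N : ℚ) : F) * Polynomial.X ^ N := by
  unfold hSym
  rw [map_sum]
  have hterm : ∀ μ : N.Partition, phiz ((zstat μ : F)⁻¹ • pProd μ)
      = Polynomial.C ((zstat μ : F)⁻¹ * (-1 : F) ^ (N - Multiset.card μ.parts))
          * Polynomial.X ^ N := by
    intro μ
    rw [map_smul, phiz_pProd, Polynomial.smul_eq_C_mul, ← mul_assoc, ← Polynomial.C_mul]
  rw [Finset.sum_congr rfl (fun μ _ => hterm μ), ← Finset.sum_mul,
    ← map_sum (Polynomial.C : F →+* Polynomial F)]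
  congr 2
  have hU : UU xe N = ∑ μ : N.Partition, ((-1 : ℚ) ^ (N - Multiset.card μ.parts)) / zstat μ := by
    unfold UU
    refine Finset.sum_congr rfl fun μ _ => ?_
    rw [show μ.parts.map xe = μ.parts.map (fun k => (-1 : ℚ) ^ (k - 1)) from rfl,
      prod_map_pow_pred _ _ (fun x hx => μ.parts_pos hx), μ.parts_sum]
  rw [hU]
  push_cast
  exact Finset.sum_congr rfl fun μ _ => by rw [div_eq_mul_inv, mul_comm]

lemma sum_mul_add_sum (d : ℕ →₀ ℕ) :
    (d.sum fun i e => i * e) + elF d = wtF d := by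
  unfold wtF elF
  rw [Finsupp.sum, Finsupp.sum, Finsupp.sum, ← Finset.sum_add_distrib]
  exact Finset.sum_congr rfl fun i _ => by ring

lemma hall_eSym_phiz (f : SymF) (n : ℕ) :
    hall f (eSym n) = (phiz f).coeff n := by
  classical
  have hA : hall f (eSym n)
      = ∑ d ∈ Finset.univ.image (dOf (n := n)), coeff d f * (-1 : F) ^ (n - elF d) := by
    rw [hall_right]
    have hsub : (eSym n).support ⊆ Finset.univ.image (dOf (n := n)) := by
      intro d hd
      by_contra hnot
      have hne : ∀ μ : n.Partition, dOf μ ≠ d := by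
        intro μ h
        exact hnot (Finset.mem_image.mpr ⟨μ, Finset.mem_univ μ, h⟩)
      exact (MvPolynomial.mem_support_iff.mp hd) (coeff_eSym_zero d hne)
    have hvan : ∀ d ∈ Finset.univ.image (dOf (n := n)), d ∉ (eSym n).support →
        coeff d f * coeff d (eSym n) * zMon d = 0 := by
      intro d _ hd
      rw [MvPolynomial.notMem_support_iff.mp hd, mul_zero, zero_mul]
    rw [Finset.sum_subset hsub hvan]
    apply Finset.sum_congr rfl
    intro d hd
    obtain ⟨μ, -, rfl⟩ := Finset.mem_image.mp hd
    have hz : ((zstat μ : ℚ) : F) ≠ 0 := by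
      exact_mod_cast zstat_ne_zero μ
    rw [coeff_eSym_dOf, zMon_dOf, elF_dOf, mul_assoc, mul_assoc,
      inv_mul_cancel₀ hz, mul_one]
  have hB : (phiz f).coeff n
      = ∑ d ∈ f.support.filter (fun d => n = wtF d), coeff d f * (-1 : F) ^ (n - elF d) := by
    unfold phiz
    rw [aeval_def, eval₂_eq]
    have hterm : ∀ d : ℕ →₀ ℕ,
        (∏ i ∈ d.support, (Polynomial.C ((-1 : F) ^ i) * Polynomial.X ^ (i + 1)) ^ d i)
          = Polynomial.C ((-1 : F) ^ (d.sum fun i e => i * e)) * Polynomial.X ^ wtF d := by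
      intro d
      rw [Finset.prod_congr rfl (fun i _ => mul_pow _ _ _), Finset.prod_mul_distrib]
      congr 1
      · rw [Finset.prod_congr rfl (fun i (_ : i ∈ d.support) => by
            rw [← map_pow (Polynomial.C : F →+* Polynomial F), ← pow_mul]),
          ← map_prod, Finset.prod_pow_eq_pow_sum]
        rfl
      · rw [Finset.prod_congr rfl (fun i (_ : i ∈ d.support) => by rw [← pow_mul]),
          Finset.prod_pow_eq_pow_sum]
        rfl
    simp only [hterm]
    have halg : ∀ a : F, algebraMap F (Polynomial F) a = Polynomial.C a := fun a => rfl
    simp only [halg]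
    rw [Polynomial.finset_sum_coeff]
    simp only [← mul_assoc, ← Polynomial.C_mul, Polynomial.coeff_C_mul, Polynomial.coeff_X_pow,
      mul_ite, mul_one, mul_zero]
    rw [← Finset.sum_filter]
    apply Finset.sum_congr rfl
    intro d hd
    obtain ⟨-, hw⟩ := Finset.mem_filter.mp hd
    have h1 := sum_mul_add_sum d
    have h2 : (d.sum fun i e => i * e) = n - elF d := by omega
    rw [h2]
  rw [hA, hB]
  refine (Finset.sum_subset ?_ ?_).symm
  · intro d hd
    obtain ⟨-, hw⟩ := Finset.mem_filter.mp hd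
    obtain ⟨μ, hμ⟩ := exists_dOf d hw.symm
    exact Finset.mem_image.mpr ⟨μ, Finset.mem_univ μ, hμ⟩
  · intro d hd hnd
    obtain ⟨μ, -, rfl⟩ := Finset.mem_image.mp hd
    have hwt : n = wtF (dOf μ) := (wtF_dOf μ).symm
    have : dOf μ ∉ f.support := by
      intro hmem
      exact hnd (Finset.mem_filter.mpr ⟨hmem, hwt⟩)
    rw [MvPolynomial.notMem_support_iff.mp this, zero_mul]

lemma coeff_zero_subY (c : ℕ → F) (f : SymF) : (subY c f).coeff 0 = f := by
  induction f using MvPolynomial.induction_on with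
  | C a =>
    show (subY c (C a)).coeff 0 = _
    rw [show subY c (C a) = algebraMap F (Polynomial SymF) a from aeval_C _ a]
    rw [Polynomial.algebraMap_apply, Polynomial.coeff_C_zero]
    rfl
  | add p q hp hq =>
    rw [map_add, Polynomial.coeff_add, hp, hq]
  | mul_X p i hp =>
    rw [map_mul, Polynomial.mul_coeff_zero, hp]
    congr 1
    rw [show subY c (X i) = Polynomial.C (X i : SymF)
        - (algebraMap F (Polynomial SymF) (c (i + 1))) * Polynomial.X ^ (i + 1) from
      aeval_X _ i]
    rw [Polynomial.coeff_sub, Polynomial.coeff_C_zero, Polynomial.algebraMap_apply,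
      Polynomial.coeff_C_mul, Polynomial.coeff_X_pow, if_neg (by omega), mul_zero, sub_zero]

lemma phiz_hZ (e : ℤ) :
    phiz (hZ e) = if e = 0 then 1 else if e = 1 then Polynomial.X else 0 := by
  unfold hZ
  by_cases h0 : e < 0
  · rw [if_pos h0, map_zero, if_neg (by omega), if_neg (by omega)]
  · rw [if_neg h0, phiz_hSym, UU_xe]
    by_cases he0 : e = 0
    · subst he0
      norm_num
    · by_cases he1 : e = 1
      · subst he1
        norm_num
      · rw [if_neg (by omega : ¬ e.toNat ≤ 1), if_neg he0, if_neg he1]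
        norm_num
lemma phiz_schurOf (l : List ℕ) :
    phiz (schurOf l) = Matrix.det (Matrix.of fun i j : Fin l.length =>
      (if ((l.get i : ℤ) - (i : ℤ) + (j : ℤ)) = 0 then 1
       else if ((l.get i : ℤ) - (i : ℤ) + (j : ℤ)) = 1 then Polynomial.X
       else (0 : Polynomial F))) := by
  unfold schurOf
  rw [show phiz (Matrix.det _) = _ from RingHom.map_det phiz.toRingHom _]
  congr 1
  refine Matrix.ext fun i j => ?_
  simp only [RingHom.mapMatrix_apply, Matrix.map_apply, Matrix.of_apply]
  exact phiz_hZ _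

lemma schur_replicate (m : ℕ) (lam : m.Partition)
    (h : lam.parts = Multiset.replicate m 1) :
    phiz (schur lam) = Polynomial.X ^ m := by
  unfold schur
  have hsort : lam.parts.sort (· ≥ ·) = List.replicate m 1 := by
    apply List.eq_replicate_iff.mpr
    constructor
    · rw [Multiset.length_sort, h, Multiset.card_replicate]
    · intro b hb
      have hb2 : b ∈ lam.parts := (Multiset.mem_sort _).mp hb
      rw [h] at hb2
      exact Multiset.eq_of_mem_replicate hb2
  rw [hsort, phiz_schurOf]
  rw [Matrix.det_of_lowerTriangular]
  · trans (∏ _i : Fin (List.replicate m 1).length, Polynomial.X)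
    · refine Finset.prod_congr rfl fun i _ => ?_
      rw [Matrix.of_apply, List.get_eq_getElem, List.getElem_replicate]
      rw [if_neg (by push_cast; omega), if_pos (by push_cast; omega)]
    · rw [Finset.prod_const, Finset.card_univ, Fintype.card_fin, List.length_replicate]
  · intro i j hij
    have hlt : (i : ℕ) < (j : ℕ) := hij
    rw [Matrix.of_apply, List.get_eq_getElem, List.getElem_replicate]
    rw [if_neg (by push_cast; omega), if_neg (by push_cast; omega)]

lemma schur_big_part (m : ℕ) (lam : m.Partition) (h : ∃ k ∈ lam.parts, 2 ≤ k) :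
    phiz (schur lam) = 0 := by
  obtain ⟨k, hk, hk2⟩ := h
  unfold schur
  rw [phiz_schurOf]
  have hkl : k ∈ lam.parts.sort (· ≥ ·) := (Multiset.mem_sort _).mpr hk
  have hlen : 0 < (lam.parts.sort (· ≥ ·)).length :=
    List.length_pos_iff.mpr (List.ne_nil_of_mem hkl)
  apply Matrix.det_eq_zero_of_row_eq_zero ⟨0, hlen⟩
  intro j
  have hsorted : (lam.parts.sort (· ≥ ·)).Pairwise (· ≥ ·) := Multiset.pairwise_sort _ _
  have hge : 2 ≤ (lam.parts.sort (· ≥ ·)).get ⟨0, hlen⟩ := by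
    obtain ⟨i, hi⟩ := List.mem_iff_get.mp hkl
    rcases Nat.eq_zero_or_pos i with hi0 | hipos
    · have : i = (⟨0, hlen⟩ : Fin _) := by
        apply Fin.ext; simpa using hi0
      rw [← this, hi]; exact hk2
    · have hrel := List.Pairwise.rel_get_of_lt hsorted
        (show (⟨0, hlen⟩ : Fin _) < i from hipos)
      rw [hi] at hrel
      omega
  rw [Matrix.of_apply]
  rw [if_neg, if_neg]
  · have h0 : ((⟨0, hlen⟩ : Fin _) : ℕ) = 0 := rfl
    push_cast [h0]
    omega
  · have h0 : ((⟨0, hlen⟩ : Fin _) : ℕ) = 0 := rfl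
    push_cast [h0]
    omega
lemma main_result (a m : ℕ) (ha : 1 ≤ a) (lam : m.Partition) :
    hall (Cop a (schur lam)) (eSym (a + m)) =
      (if a = 1 ∧ lam.parts = Multiset.replicate (a + m - 1) 1 then 1 else 0) := by
  classical
  rw [hall_eSym_phiz]
  unfold Cop
  rw [map_smul, map_sum, Polynomial.coeff_smul, Polynomial.finset_sum_coeff]
  by_cases ha1 : a = 1
  · subst ha1
    rw [Finset.sum_eq_single_of_mem 0 (Finset.mem_range.mpr (by omega))]
    · rw [map_mul, phiz_hSym, UU_xe, if_pos (by omega : (1:ℕ)+0 ≤ 1), coeff_zero_subY]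
      have hX : (Polynomial.C (((1:ℚ)) : F) * Polynomial.X ^ (1+0)) = Polynomial.X := by
        norm_num
      rw [hX]
      have hco : (phiz (schur lam) * Polynomial.X).coeff (1 + m)
          = (phiz (schur lam)).coeff m := by
        rw [show 1 + m = m + 1 from by omega, Polynomial.coeff_mul_X]
      rw [hco]
      simp only [Nat.sub_self, pow_zero, one_smul]
      by_cases hrep : lam.parts = Multiset.replicate m 1
      · rw [schur_replicate m lam hrep, Polynomial.coeff_X_pow, if_pos rfl,
          if_pos ⟨by simp, by rwa [show 1 + m - 1 = m from by omega]⟩]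
      · have hex : ∃ k ∈ lam.parts, 2 ≤ k := by
          by_contra hno
          push_neg at hno
          apply hrep
          have hall1 : ∀ x ∈ lam.parts, x = 1 := by
            intro x hx
            have h1 := lam.parts_pos hx
            have h2 := hno x hx
            omega
          have hcard : lam.parts = Multiset.replicate (Multiset.card lam.parts) 1 :=
            Multiset.eq_replicate_card.mpr hall1
          have hsum := lam.parts_sum
          conv_lhs at hsum => rw [hcard]
          rw [Multiset.sum_replicate, smul_eq_mul, mul_one] at hsum
          rwa [hsum] at hcard
        rw [schur_big_part m lam hex, Polynomial.coeff_zero, if_neg]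
        rintro ⟨-, hcon⟩
        rw [show 1 + m - 1 = m from by omega] at hcon
        exact hrep hcon
    · intro j hj hj0
      rw [map_mul, phiz_hSym, UU_xe, if_neg (by omega)]
      norm_num
  · have hzero : ∀ j ∈ Finset.range (wdeg (schur lam) + 1),
        (phiz ((subY (fun k => 1 - (q⁻¹) ^ k) (schur lam)).coeff j * hSym (a + j))).coeff
            (a + m) = 0 := by
      intro j _
      rw [map_mul, phiz_hSym, UU_xe, if_neg (by omega)]
      norm_num
    rw [Finset.sum_eq_zero hzero, smul_zero, if_neg (fun hcon => ha1 hcon.1)]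
end CopAux

open Classical in
/-- for `a ≥ 1` and a partition `λ` with `a + |λ| = n`,
`⟨C_a s_λ, e_n⟩ = 1` if `a = 1` and `λ = (1^{n-1})`, and `0` otherwise. -/
theorem Cop_schur_pairing (a m : ℕ) (ha : 1 ≤ a) (lam : m.Partition) :
    hall (Cop a (schur lam)) (eSym (a + m)) =
      (if a = 1 ∧ lam.parts = Multiset.replicate (a + m - 1) 1 then 1 else 0) := by
  exact main_result a m ha lam

end
end

section
/- For any composition p = (p_1,...,p_k) of n, the Hall scalar product ⟨C_{p_1} C_{p_2} ⋯ C_{p_k} 1, e_n⟩ equals 0 if some part p_i > 1, and equals 1 if all parts p_i = 1. -/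
open MvPolynomial

noncomputable section

namespace AuxC

/-- natural-number version of `z_μ` for a multiset of parts -/
def zN (s : Multiset ℕ) : ℕ := s.prod * ∏ k ∈ s.toFinset, (s.count k).factorial

lemma zN_pos {s : Multiset ℕ} (hs : ∀ x ∈ s, 0 < x) : 0 < zN s :=
  Nat.mul_pos (Multiset.prod_pos hs) (Finset.prod_pos fun k _ => (s.count k).factorial_pos)

lemma zN_erase {s : Multiset ℕ} {k : ℕ} (hk : k ∈ s) :
    zN s = zN (s.erase k) * (k * s.count k) := by
  have hprod : s.prod = k * (s.erase k).prod := (Multiset.prod_erase hk).symm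
  have hsub : (s.erase k).toFinset ⊆ s.toFinset :=
    Multiset.toFinset_subset.mpr (Multiset.erase_subset _ _)
  have hP : ∏ j ∈ (s.erase k).toFinset, ((s.erase k).count j).factorial
      = ∏ j ∈ s.toFinset, ((s.erase k).count j).factorial := by
    refine Finset.prod_subset hsub ?_
    intro j _ hj
    rw [Multiset.mem_toFinset, ← Multiset.count_pos, Nat.pos_iff_ne_zero, not_not] at hj
    simp [hj]
  have hkT : k ∈ s.toFinset := Multiset.mem_toFinset.mpr hk
  have hc : 1 ≤ s.count k := Multiset.one_le_count_iff_mem.mpr hk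
  have hsplit : ∏ j ∈ s.toFinset, (s.count j).factorial
      = (s.count k) * ∏ j ∈ s.toFinset, ((s.erase k).count j).factorial := by
    rw [← Finset.mul_prod_erase _ _ hkT,
      ← Finset.mul_prod_erase _ (fun j => ((s.erase k).count j).factorial) hkT]
    have h1 : (s.count k).factorial = s.count k * ((s.erase k).count k).factorial := by
      rw [Multiset.count_erase_self]
      obtain ⟨c, hc'⟩ : ∃ c, s.count k = c + 1 := ⟨s.count k - 1, by omega⟩
      rw [hc']
      simp [Nat.factorial_succ]
    have h2 : ∀ j ∈ s.toFinset.erase k, ((s.erase k).count j).factorial = (s.count j).factorial := by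
      intro j hj
      rw [Multiset.count_erase_of_ne (Finset.ne_of_mem_erase hj)]
    rw [Finset.prod_congr rfl h2] at *
    rw [h1]; ring
  unfold zN
  rw [hprod, hsplit, ← hP]; ring

/-- the signed sum `Σ_{μ⊢m} (-1)^{m-ℓ(μ)}/z_μ` -/
def Sq (m : ℕ) : ℚ :=
  ∑ μ : m.Partition, (-1) ^ (m - Multiset.card μ.parts) * ((zN μ.parts : ℚ))⁻¹

lemma card_parts_le {m : ℕ} (μ : m.Partition) : Multiset.card μ.parts ≤ m := by
  have := Multiset.card_nsmul_le_sum (s := μ.parts) (a := 1) (fun x hx => μ.parts_pos hx)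
  simpa [μ.parts_sum] using this

lemma zN_cast_ne {s : Multiset ℕ} (hs : ∀ x ∈ s, 0 < x) : ((zN s : ℚ)) ≠ 0 := by
  exact_mod_cast (zN_pos hs).ne'

/-- remove one part of size `k` -/
def eraseP (m k : ℕ) (hkm : k ≤ m) (μ : m.Partition) : (m - k).Partition :=
  if h : k ∈ μ.parts then
    ⟨μ.parts.erase k, fun {j} hj => μ.parts_pos (Multiset.mem_of_mem_erase hj), by
      have h2 := Multiset.sum_erase h
      rw [μ.parts_sum] at h2
      omega⟩
  else Nat.Partition.indiscrete (m - k)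

/-- add one part of size `k` -/
def consP (m k : ℕ) (hk1 : 1 ≤ k) (hkm : k ≤ m) (ν : (m - k).Partition) : m.Partition :=
  ⟨k ::ₘ ν.parts, by
      intro j hj
      rcases Multiset.mem_cons.mp hj with h | h
      · omega
      · exact ν.parts_pos h, by
      rw [Multiset.sum_cons, ν.parts_sum]; omega⟩

/-- key step: removing a part of size `k` -/
lemma step (m k : ℕ) (hk1 : 1 ≤ k) (hkm : k ≤ m) :
    ∑ μ : m.Partition, ((k : ℚ) * μ.parts.count k) *
        ((-1) ^ (m - Multiset.card μ.parts) * ((zN μ.parts : ℚ))⁻¹)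
      = (-1) ^ (k - 1) * Sq (m - k) := by
  rw [Sq, Finset.mul_sum]
  rw [← Finset.sum_filter_of_ne (p := fun μ : m.Partition => k ∈ μ.parts)
    (fun μ _ hne => by
      by_contra hmem
      rw [← Multiset.count_eq_zero] at hmem
      simp [hmem] at hne)]
  refine Finset.sum_nbij' (eraseP m k hkm) (consP m k hk1 hkm) ?_ ?_ ?_ ?_ ?_
  · intro μ _; exact Finset.mem_univ _
  · intro ν _
    refine Finset.mem_filter.mpr ⟨Finset.mem_univ _, ?_⟩
    exact Multiset.mem_cons_self _ _
  · intro μ hμ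
    have hk : k ∈ μ.parts := (Finset.mem_filter.mp hμ).2
    apply Nat.Partition.ext
    rw [consP, eraseP, dif_pos hk]
    exact Multiset.cons_erase hk
  · intro ν _
    apply Nat.Partition.ext
    rw [consP, eraseP, dif_pos (Multiset.mem_cons_self _ _)]
    exact Multiset.erase_cons_head _ _
  · intro μ hμ
    have hk : k ∈ μ.parts := (Finset.mem_filter.mp hμ).2
    rw [eraseP, dif_pos hk]
    set c := μ.parts.count k with hc
    have hc1 : 1 ≤ c := Multiset.one_le_count_iff_mem.mpr hk
    set ℓ := Multiset.card μ.parts with hl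
    have hl1 : 1 ≤ ℓ := Multiset.card_pos_iff_exists_mem.mpr ⟨k, hk⟩
    have hle : Multiset.card (μ.parts.erase k) ≤ m - k :=
      card_parts_le (⟨μ.parts.erase k, fun {j} hj => μ.parts_pos (Multiset.mem_of_mem_erase hj), by
        have h2 := Multiset.sum_erase hk
        rw [μ.parts_sum] at h2
        omega⟩ : (m - k).Partition)
    have hcard : Multiset.card (μ.parts.erase k) = ℓ - 1 := by
      rw [Multiset.card_erase_of_mem hk]; rfl
    rw [hcard] at hle
    have hz : ((zN μ.parts : ℚ)) = (zN (μ.parts.erase k) : ℚ) * ((k : ℚ) * c) := by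
      exact_mod_cast congrArg (Nat.cast (R := ℚ)) (zN_erase hk)
    have hA : ((zN (μ.parts.erase k) : ℚ)) ≠ 0 :=
      zN_cast_ne (fun j hj => μ.parts_pos (Multiset.mem_of_mem_erase hj))
    have hB : ((k : ℚ) * c) ≠ 0 := by
      have : (0 : ℚ) < (k : ℚ) * c := by
        have := hk1; have := hc1; positivity
      exact this.ne'
    have hexp : m - ℓ = (k - 1) + ((m - k) - (ℓ - 1)) := by omega
    rw [hz, hcard, hexp, pow_add]
    field_simp

lemma Sq_zero : Sq 0 = 1 := by
  rw [Sq]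
  rw [Finset.sum_eq_single_of_mem (default : Nat.Partition 0) (Finset.mem_univ _)
    (fun b _ hb => absurd (Subsingleton.elim b default) hb)]
  have hp : (default : Nat.Partition 0).parts = 0 := by
    have hs := (default : Nat.Partition 0).parts_sum
    rw [Multiset.sum_eq_zero_iff] at hs
    rw [Multiset.eq_zero_iff_forall_notMem]
    intro x hx
    exact absurd (hs x hx) ((default : Nat.Partition 0).parts_pos hx).ne'
  simp [hp, zN]

lemma sum_part_sizes (m : ℕ) (μ : m.Partition) :
    (m : ℚ) = ∑ j ∈ Finset.range m, ((j + 1 : ℕ) : ℚ) * μ.parts.count (j + 1) := by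
  have hN : m = ∑ j ∈ Finset.range m, (j + 1) * μ.parts.count (j + 1) := by
    have h0 : μ.parts.sum = ∑ i ∈ μ.parts.toFinset, μ.parts.count i • i :=
      Finset.sum_multiset_count μ.parts
    have himg : ∑ j ∈ Finset.range m, (j + 1) * μ.parts.count (j + 1)
        = ∑ i ∈ (Finset.range m).image (· + 1), i * μ.parts.count i := by
      rw [Finset.sum_image (fun a _ b _ h => by omega)]
    have hsub : μ.parts.toFinset ⊆ (Finset.range m).image (· + 1) := by
      intro i hi
      rw [Multiset.mem_toFinset] at hi
      have h1 : 1 ≤ i := μ.parts_pos hi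
      have h2 : i ≤ m := μ.parts_sum ▸ Multiset.le_sum_of_mem hi
      refine Finset.mem_image.mpr ⟨i - 1, Finset.mem_range.mpr (by omega), ?_⟩
      show i - 1 + 1 = i
      omega
    have hext : ∑ i ∈ (Finset.range m).image (· + 1), i * μ.parts.count i
        = ∑ i ∈ μ.parts.toFinset, i * μ.parts.count i := by
      refine (Finset.sum_subset hsub ?_).symm
      intro i _ hni
      rw [Multiset.mem_toFinset, ← Multiset.count_pos, Nat.pos_iff_ne_zero, not_not] at hni
      simp [hni]
    have hfin : ∑ i ∈ μ.parts.toFinset, i * Multiset.count i μ.parts = μ.parts.sum := by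
      rw [h0]
      exact Finset.sum_congr rfl fun i _ => by simp [smul_eq_mul, mul_comm]
    rw [himg, hext, hfin, μ.parts_sum]
  exact_mod_cast hN

lemma Sq_rec (m : ℕ) :
    (m : ℚ) * Sq m = ∑ j ∈ Finset.range m, (-1) ^ j * Sq (m - (j + 1)) := by
  rw [Sq, Finset.mul_sum]
  have h1 : ∀ μ : m.Partition,
      (m : ℚ) * ((-1) ^ (m - Multiset.card μ.parts) * ((zN μ.parts : ℚ))⁻¹)
      = ∑ j ∈ Finset.range m, ((j + 1 : ℕ) : ℚ) * μ.parts.count (j + 1) *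
          ((-1) ^ (m - Multiset.card μ.parts) * ((zN μ.parts : ℚ))⁻¹) := by
    intro μ
    rw [← Finset.sum_mul, ← sum_part_sizes m μ]
  rw [Finset.sum_congr rfl fun μ _ => h1 μ, Finset.sum_comm]
  refine Finset.sum_congr rfl fun j hj => ?_
  rw [Finset.mem_range] at hj
  have := step m (j + 1) (by omega) (by omega)
  rw [show (j + 1) - 1 = j from rfl] at this
  exact this

lemma Sq_val (m : ℕ) : Sq m = if m ≤ 1 then 1 else 0 := by
  induction m using Nat.strong_induction_on with
  | _ m ih =>
    match m with
    | 0 => simpa using Sq_zero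
    | 1 =>
      have := Sq_rec 1
      simpa [Sq_zero] using this
    | (n + 2) =>
      have hr := Sq_rec (n + 2)
      have hv : ∀ j < n + 2, Sq (n + 2 - (j+1)) = if n + 2 - (j+1) ≤ 1 then 1 else 0 :=
        fun j hj => ih _ (by omega)
      rw [Finset.sum_congr rfl (fun j hj => by
        rw [hv j (Finset.mem_range.mp hj)])] at hr
      have hs : ∑ j ∈ Finset.range (n + 2),
          ((-1 : ℚ)) ^ j * (if n + 2 - (j+1) ≤ 1 then 1 else 0) = 0 := by
        rw [Finset.sum_range_succ, Finset.sum_range_succ]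
        have h0 : ∀ j ∈ Finset.range n, ((-1 : ℚ)) ^ j * (if n + 2 - (j+1) ≤ 1 then 1 else 0) = 0 := by
          intro j hj
          rw [Finset.mem_range] at hj
          rw [if_neg (by omega)]
          ring
        rw [Finset.sum_congr rfl h0]
        rw [if_pos (by omega), if_pos (by omega)]
        simp [pow_succ]
      rw [hs] at hr
      have hz : Sq (n + 2) = 0 := by
        rcases mul_eq_zero.mp hr with h | h
        · exact absurd h (by positivity)
        · exact h
      rw [hz, if_neg (by omega)]

end AuxC

namespace AuxC

/-- exponent vector of the power-sum monomial `p_μ` -/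
def dOf (s : Multiset ℕ) : ℕ →₀ ℕ := Multiset.toFinsupp (s.map (· - 1))

/-- weighted degree of an exponent vector -/
def WofD (d : ℕ →₀ ℕ) : ℕ := ∑ k ∈ d.support, (k + 1) * d k

/-- sign statistic of an exponent vector -/
def AofD (d : ℕ →₀ ℕ) : ℕ := ∑ k ∈ d.support, k * d k

lemma W_toFinsupp (u : Multiset ℕ) :
    WofD (Multiset.toFinsupp u) = (u.map (· + 1)).sum := by
  rw [WofD, Multiset.toFinsupp_support, Finset.sum_multiset_map_count]
  exact Finset.sum_congr rfl fun k _ => by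
    rw [Multiset.toFinsupp_apply, smul_eq_mul]; ring

lemma A_toFinsupp (u : Multiset ℕ) :
    AofD (Multiset.toFinsupp u) = u.sum := by
  rw [AofD, Multiset.toFinsupp_support]
  have : u.sum = (u.map id).sum := by rw [Multiset.map_id]
  rw [this, Finset.sum_multiset_map_count]
  exact Finset.sum_congr rfl fun k _ => by
    rw [Multiset.toFinsupp_apply, smul_eq_mul, id]; ring

lemma map_succ_pred {s : Multiset ℕ} (hs : ∀ x ∈ s, 0 < x) :
    (s.map (· - 1)).map (· + 1) = s := by
  rw [Multiset.map_map]
  refine Eq.trans (Multiset.map_congr rfl fun x hx => ?_) (Multiset.map_id s)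
  simp only [Function.comp_apply, id_eq]
  have := hs x hx
  omega

lemma map_pred_succ (u : Multiset ℕ) : (u.map (· + 1)).map (· - 1) = u := by
  rw [Multiset.map_map]
  refine Eq.trans (Multiset.map_congr rfl fun x _ => ?_) (Multiset.map_id u)
  simp only [Function.comp_apply, id_eq]
  omega

lemma card_le_sum {s : Multiset ℕ} (hs : ∀ x ∈ s, 0 < x) : Multiset.card s ≤ s.sum := by
  have := Multiset.card_nsmul_le_sum (s := s) (a := 1) (fun x hx => hs x hx)
  simpa using this

lemma sum_map_pred {s : Multiset ℕ} (hs : ∀ x ∈ s, 0 < x) :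
    (s.map (· - 1)).sum = s.sum - Multiset.card s := by
  induction s using Multiset.induction_on with
  | empty => simp
  | cons a s ih =>
    have ha : 0 < a := hs a (Multiset.mem_cons_self a s)
    have hs' : ∀ x ∈ s, 0 < x := fun x hx => hs x (Multiset.mem_cons_of_mem hx)
    have hcs : Multiset.card s ≤ s.sum := card_le_sum hs'
    rw [Multiset.map_cons, Multiset.sum_cons, Multiset.sum_cons, Multiset.card_cons, ih hs']
    omega

lemma dOf_W {s : Multiset ℕ} (hs : ∀ x ∈ s, 0 < x) : WofD (dOf s) = s.sum := by
  rw [dOf, W_toFinsupp, map_succ_pred hs]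

lemma dOf_A {s : Multiset ℕ} (hs : ∀ x ∈ s, 0 < x) :
    AofD (dOf s) = s.sum - Multiset.card s := by
  rw [dOf, A_toFinsupp, sum_map_pred hs]

lemma prod_X_eq_monomial (s : Multiset ℕ) :
    (s.map (X : ℕ → SymF)).prod = monomial (Multiset.toFinsupp s) (1 : F) := by
  induction s using Multiset.induction_on with
  | empty => simp
  | cons a s ih =>
    have h1 : Multiset.toFinsupp (a ::ₘ s)
        = Finsupp.single a 1 + Multiset.toFinsupp s := by
      rw [show a ::ₘ s = ({a} : Multiset ℕ) + s from (Multiset.singleton_add a s).symm,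
        map_add, Multiset.toFinsupp_singleton]
    rw [Multiset.map_cons, Multiset.prod_cons, ih, h1, monomial_single_add, pow_one]

lemma pProd_eq {n : ℕ} (μ : n.Partition) :
    pProd μ = monomial (dOf μ.parts) (1 : F) := by
  rw [pProd, dOf]
  have : μ.parts.map pSym = (μ.parts.map (· - 1)).map (X : ℕ → SymF) := by
    rw [Multiset.map_map]; rfl
  rw [this, prod_X_eq_monomial]

lemma count_map_pred {s : Multiset ℕ} (hs : ∀ x ∈ s, 0 < x) (k : ℕ) :
    Multiset.count k (s.map (· - 1)) = Multiset.count (k + 1) s := by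
  rw [Multiset.count_map]
  have h2 : Multiset.count (k + 1) s = Multiset.card (s.filter (fun a => k + 1 = a)) := by
    have := Multiset.count_map (id : ℕ → ℕ) s (k + 1)
    simpa using this
  rw [h2]
  congr 1
  exact Multiset.filter_congr fun x hx => by have := hs x hx; constructor <;> omega

lemma zN_cast_eqF {s : Multiset ℕ} (hs : ∀ x ∈ s, 0 < x) :
    zMon (dOf s) = ((zN s : ℕ) : F) := by
  rw [zMon, dOf, Multiset.toFinsupp_support, Multiset.toFinset_map]
  have hinj : Set.InjOn (· - 1) s.toFinset := by
    intro a ha b hb hab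
    have ha' := hs a (Multiset.mem_toFinset.mp ha)
    have hb' := hs b (Multiset.mem_toFinset.mp hb)
    simp only at hab
    omega
  rw [Finset.prod_image hinj]
  have hterm : ∀ j ∈ s.toFinset,
      ((j - 1 + 1 : ℕ) : F) ^ (Multiset.toFinsupp (s.map (· - 1))) (j - 1) *
        ((Multiset.toFinsupp (s.map (· - 1))) (j - 1)).factorial
      = ((j : ℕ) : F) ^ (s.count j) * ((s.count j).factorial : F) := by
    intro j hj
    have hjpos := hs j (Multiset.mem_toFinset.mp hj)
    rw [Multiset.toFinsupp_apply, count_map_pred hs]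
    rw [show j - 1 + 1 = j from by omega]
  rw [Finset.prod_congr rfl hterm, zN,
    show s.prod = ∏ m ∈ s.toFinset, m ^ Multiset.count m s from Finset.prod_multiset_count s]
  push_cast
  rw [Finset.prod_mul_distrib]

/-- the sign-and-grading evaluation `p_k ↦ (-1)^{k-1} z^k` -/
def ez : SymF →ₐ[F] Polynomial F :=
  aeval (fun i => Polynomial.C ((-1 : F) ^ i) * Polynomial.X ^ (i + 1))

lemma ez_monomial (d : ℕ →₀ ℕ) (c : F) :
    ez (monomial d c) = Polynomial.C (c * (-1) ^ (AofD d)) * Polynomial.X ^ (WofD d) := by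
  rw [monomial_eq, map_mul]
  have hC : ez (MvPolynomial.C c) = Polynomial.C c := by
    rw [ez, ← MvPolynomial.algebraMap_eq, AlgHom.commutes, Polynomial.algebraMap_apply]
    norm_num
  rw [hC, Finsupp.prod, map_prod]
  have hterm : ∀ k ∈ d.support, ez (X k ^ d k)
      = Polynomial.C ((-1 : F) ^ (k * d k)) * Polynomial.X ^ ((k + 1) * d k) := by
    intro k _
    rw [map_pow, ez, aeval_X, mul_pow, ← Polynomial.C_pow, ← pow_mul, ← pow_mul]
  rw [Finset.prod_congr rfl hterm, Finset.prod_mul_distrib, ← map_prod,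
    Finset.prod_pow_eq_pow_sum, Finset.prod_pow_eq_pow_sum, ← AofD, ← WofD,
    ← mul_assoc, ← Polynomial.C_mul]

lemma zstat_eq {n : ℕ} (μ : n.Partition) : zstat μ = ((zN μ.parts : ℕ) : ℚ) := by
  rw [zstat, zN]
  push_cast
  ring

lemma zstatF_ne {n : ℕ} (μ : n.Partition) : ((zstat μ : ℚ) : F) ≠ 0 := by
  rw [zstat_eq]
  rw [Rat.cast_natCast]
  exact_mod_cast (zN_pos (fun x hx => μ.parts_pos hx)).ne'

lemma ez_hSym (m : ℕ) : ez (hSym m) = if m ≤ 1 then Polynomial.X ^ m else 0 := by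
  rw [hSym, map_sum]
  have h1 : ∀ μ : m.Partition, ez (((zstat μ : ℚ) : F)⁻¹ • pProd μ)
      = (((zstat μ : ℚ) : F)⁻¹ * (-1) ^ (m - Multiset.card μ.parts)) •
          (Polynomial.X ^ m : Polynomial F) := by
    intro μ
    rw [map_smul, pProd_eq, ez_monomial, one_mul,
      dOf_A (fun x hx => μ.parts_pos hx), dOf_W (fun x hx => μ.parts_pos hx), μ.parts_sum]
    rw [Polynomial.smul_eq_C_mul, Polynomial.smul_eq_C_mul, Polynomial.C_mul, mul_assoc]
  rw [Finset.sum_congr rfl fun μ _ => h1 μ, ← Finset.sum_smul]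
  have h2 : (∑ μ : m.Partition, ((zstat μ : ℚ) : F)⁻¹ * (-1) ^ (m - Multiset.card μ.parts))
      = ((Sq m : ℚ) : F) := by
    rw [Sq]
    push_cast
    refine Finset.sum_congr rfl fun μ _ => ?_
    rw [zstat_eq]
    push_cast
    ring
  rw [h2, Sq_val]
  split_ifs with h
  · norm_num
  · norm_num

lemma coeff_eSym (n : ℕ) (d : ℕ →₀ ℕ) :
    coeff d (eSym n) = ∑ μ : n.Partition,
      (if dOf μ.parts = d then
        ((-1 : F) ^ (n - Multiset.card μ.parts) * ((zstat μ : ℚ) : F)⁻¹) else 0) := by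
  rw [eSym, coeff_sum]
  refine Finset.sum_congr rfl fun μ _ => ?_
  rw [coeff_smul, pProd_eq, coeff_monomial, smul_eq_mul, mul_ite, mul_one, mul_zero]

/-- partition of `n` built from an exponent vector of weighted degree `n` -/
def partOf (n : ℕ) (d : ℕ →₀ ℕ) : n.Partition :=
  if h : ((Finsupp.toMultiset d).map (· + 1)).sum = n then
    ⟨(Finsupp.toMultiset d).map (· + 1), fun {j} hj => by
        rcases Multiset.mem_map.mp hj with ⟨x, _, rfl⟩; omega, h⟩
  else Nat.Partition.indiscrete n

lemma WofD_eq (d : ℕ →₀ ℕ) : WofD d = ((Finsupp.toMultiset d).map (· + 1)).sum := by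
  conv_lhs => rw [← Finsupp.toMultiset_toFinsupp d]
  exact W_toFinsupp _

lemma partOf_dOf {n : ℕ} (μ : n.Partition) : partOf n (dOf μ.parts) = μ := by
  have hparts : ((Finsupp.toMultiset (dOf μ.parts)).map (· + 1)) = μ.parts := by
    rw [dOf, Multiset.toFinsupp_toMultiset, map_succ_pred (fun x hx => μ.parts_pos hx)]
  have hcond : ((Finsupp.toMultiset (dOf μ.parts)).map (· + 1)).sum = n := by
    rw [hparts, μ.parts_sum]
  rw [partOf, dif_pos hcond]
  exact Nat.Partition.ext hparts

lemma dOf_partOf (n : ℕ) (d : ℕ →₀ ℕ) (h : WofD d = n) : dOf (partOf n d).parts = d := by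
  have hcond : ((Finsupp.toMultiset d).map (· + 1)).sum = n := by rw [← WofD_eq, h]
  rw [partOf, dif_pos hcond]
  show dOf ((Finsupp.toMultiset d).map (· + 1)) = d
  rw [dOf, map_pred_succ, Finsupp.toMultiset_toFinsupp]

open Classical in
lemma hall_eSym (n : ℕ) (f : SymF) : hall f (eSym n) = (ez f).coeff n := by
  -- left side
  have hL : hall f (eSym n)
      = ∑ μ : n.Partition, (-1 : F) ^ (n - Multiset.card μ.parts) * coeff (dOf μ.parts) f := by
    rw [hall]
    have hterm : ∀ d ∈ f.support, coeff d f * coeff d (eSym n) * zMon d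
        = ∑ μ : n.Partition, (if dOf μ.parts = d then
            (-1 : F) ^ (n - Multiset.card μ.parts) * ((zstat μ : ℚ) : F)⁻¹ *
              (coeff d f * zMon d) else 0) := by
      intro d _
      rw [coeff_eSym, Finset.mul_sum, Finset.sum_mul]
      refine Finset.sum_congr rfl fun μ _ => ?_
      by_cases h : dOf μ.parts = d
      · rw [if_pos h, if_pos h]; ring
      · rw [if_neg h, if_neg h, mul_zero, zero_mul]
    rw [Finset.sum_congr rfl hterm, Finset.sum_comm]
    refine Finset.sum_congr rfl fun μ _ => ?_
    rw [Finset.sum_ite_eq f.support (dOf μ.parts)]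
    by_cases h : dOf μ.parts ∈ f.support
    · rw [if_pos h, zN_cast_eqF (fun x hx => μ.parts_pos hx)]
      have hz : ((zstat μ : ℚ) : F) = ((zN μ.parts : ℕ) : F) := by
        rw [zstat_eq, Rat.cast_natCast]
      have hzne : ((zN μ.parts : ℕ) : F) ≠ 0 := by rw [← hz]; exact zstatF_ne μ
      rw [hz]
      field_simp
    · rw [if_neg h]
      rw [MvPolynomial.notMem_support_iff] at h
      rw [h, mul_zero]
  -- right side
  have hR : (ez f).coeff n
      = ∑ d ∈ f.support.filter (fun d => WofD d = n), coeff d f * (-1 : F) ^ (AofD d) := by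
    conv_lhs => rw [f.as_sum, map_sum]
    rw [Polynomial.finset_sum_coeff, Finset.sum_filter]
    refine Finset.sum_congr rfl fun d _ => ?_
    rw [ez_monomial, Polynomial.coeff_C_mul, Polynomial.coeff_X_pow]
    by_cases h : WofD d = n
    · rw [if_pos h, if_pos h.symm, mul_one]
    · rw [if_neg h, if_neg (fun hh => h hh.symm), mul_zero]
  rw [hL, hR]
  rw [← Finset.sum_filter_of_ne (p := fun μ : n.Partition => dOf μ.parts ∈ f.support)
    (fun μ _ hne => by
      by_contra hmem
      rw [MvPolynomial.notMem_support_iff] at hmem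
      rw [hmem, mul_zero] at hne
      exact hne rfl)]
  refine Finset.sum_nbij' (fun μ => dOf μ.parts) (partOf n) ?_ ?_ ?_ ?_ ?_
  · intro μ hμ
    rw [Finset.mem_filter] at hμ ⊢
    exact ⟨hμ.2, by rw [dOf_W (fun x hx => μ.parts_pos hx), μ.parts_sum]⟩
  · intro d hd
    rw [Finset.mem_filter] at hd ⊢
    refine ⟨Finset.mem_univ _, ?_⟩
    rw [dOf_partOf n d hd.2]
    exact hd.1
  · intro μ _; exact partOf_dOf μ
  · intro d hd
    rw [Finset.mem_filter] at hd
    exact dOf_partOf n d hd.2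
  · intro μ _
    rw [dOf_A (fun x hx => μ.parts_pos hx), μ.parts_sum]
    ring

lemma coeff0_subY (c : ℕ → F) (G : SymF) : Polynomial.coeff (subY c G) 0 = G := by
  induction G using MvPolynomial.induction_on with
  | C a =>
    rw [subY, aeval_C, Polynomial.algebraMap_apply, Polynomial.coeff_C, if_pos rfl,
      MvPolynomial.algebraMap_eq]
  | add p q hp hq => rw [map_add, Polynomial.coeff_add, hp, hq]
  | mul_X p i hp =>
    rw [map_mul, Polynomial.mul_coeff_zero, hp]
    have : (subY c) (X i) = Polynomial.C (X i) -
        algebraMap F (Polynomial SymF) (c (i + 1)) * Polynomial.X ^ (i + 1) := by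
      rw [subY, aeval_X]
    rw [this]
    rw [Polynomial.coeff_sub, Polynomial.coeff_C, if_pos rfl, Polynomial.algebraMap_apply,
      Polynomial.coeff_C_mul, Polynomial.coeff_X_pow, if_neg (by omega), mul_zero, sub_zero]

lemma ez_Cop (a : ℕ) (ha : 0 < a) (G : SymF) :
    ez (Cop a G) = if a = 1 then Polynomial.X * ez G else 0 := by
  rw [Cop, map_smul, map_sum]
  by_cases h1 : a = 1
  · subst h1
    rw [if_pos rfl]
    rw [Finset.sum_eq_single_of_mem 0 (Finset.mem_range.mpr (by omega))
      (fun j _ hj => by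
        rw [map_mul, ez_hSym, if_neg (by omega), mul_zero])]
    rw [map_mul, ez_hSym, if_pos (by omega), coeff0_subY]
    norm_num
    ring
  · rw [if_neg h1]
    have hz : ∀ j ∈ Finset.range (wdeg G + 1),
        ez (Polynomial.coeff (subY (fun k => 1 - (q⁻¹) ^ k) G) j * hSym (a + j)) = 0 := by
      intro j _
      rw [map_mul, ez_hSym, if_neg (by omega), mul_zero]
    rw [Finset.sum_congr rfl hz, Finset.sum_const_zero, smul_zero]

lemma ez_CWord (p : List ℕ) (hp : ∀ x ∈ p, 0 < x) :
    ez (CWord p) = if ∀ x ∈ p, x = 1 then Polynomial.X ^ p.length else 0 := by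
  induction p with
  | nil => simp [CWord]
  | cons a p ih =>
    have hCW : CWord (a :: p) = Cop a (CWord p) := rfl
    have ha : 0 < a := hp a List.mem_cons_self
    have hp' : ∀ x ∈ p, 0 < x := fun x hx => hp x (List.mem_cons_of_mem a hx)
    rw [hCW, ez_Cop a ha, ih hp']
    by_cases h1 : a = 1
    · subst h1
      rw [if_pos rfl]
      by_cases h2 : ∀ x ∈ p, x = 1
      · rw [if_pos h2, if_pos (by
          intro x hx
          rcases List.mem_cons.mp hx with h | h
          · exact h
          · exact h2 x h), List.length_cons, pow_succ]
        ring
      · rw [if_neg h2, if_neg (by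
          intro hall
          exact h2 fun x hx => hall x (List.mem_cons_of_mem 1 hx)), mul_zero]
    · rw [if_neg h1, if_neg (by
        intro hall
        exact h1 (hall a List.mem_cons_self))]

lemma sum_of_ones (p : List ℕ) (h : ∀ x ∈ p, x = 1) : p.sum = p.length := by
  induction p with
  | nil => rfl
  | cons a p ih =>
    rw [List.sum_cons, List.length_cons, h a List.mem_cons_self,
      ih (fun x hx => h x (List.mem_cons_of_mem a hx))]
    omega

end AuxC


open Classical in
/-- for a composition `p = (p₁,…,p_k)` of `n`,
`⟨C_{p₁} C_{p₂} ⋯ C_{p_k} 1, e_n⟩` equals `0` if some part `pᵢ > 1` and `1` if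
all parts equal `1`. -/
theorem CWord_en_pairing (p : List ℕ) (hp : ∀ x ∈ p, 0 < x) :
    hall (CWord p) (eSym p.sum) = (if ∀ x ∈ p, x = 1 then 1 else 0) := by
  rw [AuxC.hall_eSym, AuxC.ez_CWord p hp]
  split_ifs with h
  · rw [AuxC.sum_of_ones p h, Polynomial.coeff_X_pow, if_pos rfl]
  · rw [Polynomial.coeff_zero]

end
end

section
/- Let PF be a parking function on the (J+n)×(J+n) lattice square whose diagonal word is a shuffle of the words 12⋯J and (J+1)(J+2)⋯(J+n). Then every column of the Dyck path supporting PF has length at most 2, and any column of length 2 consists of a small car (≤ J) with a big car (> J) directly above it. -/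
/-- A parking function on the `N × N` lattice square, encoded by its two-line
array: cars `v` (a bijection onto `{1,…,N}`) and area numbers `u`. -/
structure ParkingFunction (N : ℕ) where
  u : Fin N → ℕ
  v : Fin N → ℕ
  u_first : ∀ h : 0 < N, u ⟨0, h⟩ = 0
  u_step : ∀ i : Fin N, ∀ h : (i : ℕ) + 1 < N, u ⟨(i : ℕ) + 1, h⟩ ≤ u i + 1
  v_incr : ∀ i : Fin N, ∀ h : (i : ℕ) + 1 < N,
    u ⟨(i : ℕ) + 1, h⟩ = u i + 1 → v i < v ⟨(i : ℕ) + 1, h⟩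
  v_mem : ∀ i, v i ∈ Finset.Icc 1 N
  v_inj : Function.Injective v

/-- The diagonal word of a parking function: read cars by diagonals, from the
highest diagonal down to the main diagonal, from right to left within each
diagonal. -/
def ParkingFunction.diagWord {N : ℕ} (PF : ParkingFunction N) : List ℕ :=
  ((List.range N).reverse).flatMap fun d =>
    (((List.finRange N).filter fun i => PF.u i = d).reverse).map PF.v

/-- `IsShuffle w₁ w₂ w` means `w` is a shuffle (interleaving) of `w₁` and `w₂`. -/
inductive IsShuffle : List ℕ → List ℕ → List ℕ → Prop
  | nil : IsShuffle [] [] []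
  | left {a b c x} : IsShuffle a b c → IsShuffle (x :: a) b (x :: c)
  | right {a b c x} : IsShuffle a b c → IsShuffle a (x :: b) (x :: c)

/-- The column (abscissa) of the `i`-th car of a parking function. -/
def ParkingFunction.col {N : ℕ} (PF : ParkingFunction N) (i : Fin N) : ℕ :=
  (i : ℕ) - PF.u i

section Aux

open List

/-- From a pairwise-sorted list, any two members in order form a sublist. -/
lemma pair_sublist {α : Type*} {R : α → α → Prop}
    (hasymm : ∀ x y, R x y → ¬ R y x) {l : List α} (hl : l.Pairwise R)
    {a b : α} (ha : a ∈ l) (hb : b ∈ l) (hab : R a b) : [a, b] <+ l := by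
  induction l with
  | nil => simp at ha
  | cons x t ih =>
    rcases List.mem_cons.1 ha with rfl | hat
    · have hbt : b ∈ t := by
        rcases List.mem_cons.1 hb with rfl | h
        · exact absurd hab (hasymm _ _ hab)
        · exact h
      exact (List.singleton_sublist.2 hbt).cons₂ a
    · have hbt : b ∈ t := by
        rcases List.mem_cons.1 hb with rfl | h
        · exact absurd (List.rel_of_pairwise_cons hl hat) (hasymm _ _ hab)
        · exact h
      exact (ih hl.of_cons hat hbt).cons x

lemma sublist_flatMap {α β : Type*} (f : α → List β) {l₁ l₂ : List α}
    (h : l₁ <+ l₂) : l₁.flatMap f <+ l₂.flatMap f := by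
  induction h with
  | slnil => simp
  | cons a h ih => simpa using ih.trans (List.sublist_append_right _ _)
  | cons_cons a h ih => simpa using ih.append_left (f a)

lemma shuffle_filter {a b w : List ℕ} (h : IsShuffle a b w) (p : ℕ → Bool)
    (hpa : ∀ x ∈ a, p x = true) (hpb : ∀ x ∈ b, p x = false) :
    w.filter p = a ∧ w.filter (fun x => ! p x) = b := by
  induction h with
  | nil => simp
  | @left a b c x h ih =>
    have hx := hpa x (by simp)
    have := ih (fun y hy => hpa y (by simp [hy])) hpb
    simp [List.filter_cons, hx, this.1, this.2]
  | @right a b c x h ih =>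
    have hx := hpb x (by simp)
    have := ih hpa (fun y hy => hpb y (by simp [hy]))
    simp [List.filter_cons, hx, this.1, this.2]

variable {N : ℕ} (PF : ParkingFunction N)

lemma u_le_aux : ∀ k, ∀ h : k < N, PF.u ⟨k, h⟩ ≤ k := by
  intro k
  induction k with
  | zero => intro h; simp [PF.u_first h]
  | succ m ih =>
    intro h
    have hm : m < N := Nat.lt_of_succ_lt h
    have h1 : PF.u ⟨m + 1, h⟩ ≤ PF.u ⟨m, hm⟩ + 1 := PF.u_step ⟨m, hm⟩ h
    have h2 := ih hm
    omega

lemma u_le (i : Fin N) : PF.u i ≤ (i : ℕ) := u_le_aux PF i.1 i.2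

lemma col_mono : ∀ gap k, ∀ h : k + gap < N,
    PF.col ⟨k, by omega⟩ ≤ PF.col ⟨k + gap, h⟩ := by
  intro gap
  induction gap with
  | zero => intro k h; rfl
  | succ m ih =>
    intro k h
    have h1 : k + m < N := by omega
    have step : PF.col ⟨k + m, h1⟩ ≤ PF.col ⟨k + m + 1, h⟩ := by
      have hs : PF.u ⟨k + m + 1, h⟩ ≤ PF.u ⟨k + m, h1⟩ + 1 := PF.u_step ⟨k + m, h1⟩ h
      have hle : PF.u ⟨k + m, h1⟩ ≤ k + m := u_le_aux PF (k + m) h1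
      show (k + m) - PF.u ⟨k + m, h1⟩ ≤ (k + m + 1) - PF.u ⟨k + m + 1, h⟩
      omega
    exact le_trans (ih k h1) step

/-- cars in the same column: the `u`'s increase by one each step and the `v`'s
increase. -/
lemma chain : ∀ gap, ∀ i j : Fin N, (j : ℕ) = (i : ℕ) + gap →
    PF.col i = PF.col j → PF.u j = PF.u i + gap ∧ (0 < gap → PF.v i < PF.v j) := by
  intro gap
  induction gap with
  | zero =>
    intro i j hij _
    have : i = j := Fin.ext (by omega)
    subst this
    simp
  | succ m ih =>
    intro i j hij hcol
    have hi1 : (i : ℕ) + 1 < N := by omega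
    have hj' : (i : ℕ) + 1 + m < N := by omega
    set i' : Fin N := ⟨(i : ℕ) + 1, hi1⟩ with hi'
    have hji' : j = ⟨(i : ℕ) + 1 + m, hj'⟩ := Fin.ext (show (j : ℕ) = (i : ℕ) + 1 + m by omega)
    have hcol1 : PF.col i = PF.col i' := by
      have h1 : PF.col i ≤ PF.col i' := by
        have := col_mono PF 1 (i : ℕ) hi1
        exact this
      have h2 : PF.col i' ≤ PF.col j := by
        rw [hji']
        exact col_mono PF m ((i : ℕ) + 1) hj'
      omega
    have hui' : PF.u i' = PF.u i + 1 := by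
      have e1 : PF.col i = (i : ℕ) - PF.u i := rfl
      have e2 : PF.col i' = ((i : ℕ) + 1) - PF.u i' := rfl
      have l1 : PF.u i ≤ (i : ℕ) := u_le PF i
      have l2 : PF.u i' ≤ (i : ℕ) + 1 := u_le PF i'
      omega
    have hv : PF.v i < PF.v i' := PF.v_incr i hi1 hui'
    have hrest := ih i' j (show (j : ℕ) = (i : ℕ) + 1 + m by omega)
      (hcol1 ▸ hcol)
    refine ⟨by omega, fun _ => ?_⟩
    rcases Nat.eq_zero_or_pos m with rfl | hm
    · have : i' = j := Fin.ext (show (i : ℕ) + 1 = (j : ℕ) by omega)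
      exact this ▸ hv
    · exact hv.trans (hrest.2 hm)

/-- if `u i < u j` then the car `v j` is read before `v i` in the diagonal
word. -/
lemma pair_in_diagWord (i j : Fin N) (hu : PF.u i < PF.u j) :
    [PF.v j, PF.v i] <+ PF.diagWord := by
  have hdN : PF.u j < N := lt_of_le_of_lt (u_le PF j) j.2
  have hsub : [PF.u i, PF.u j] <+ List.range N :=
    pair_sublist (fun x y h h' => by omega) (List.pairwise_lt_range (n := N))
      (List.mem_range.2 (by omega)) (List.mem_range.2 hdN) hu
  have hrev : [PF.u j, PF.u i] <+ (List.range N).reverse := by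
    simpa using hsub.reverse
  set f : ℕ → List ℕ := fun d =>
    (((List.finRange N).filter fun i => PF.u i = d).reverse).map PF.v with hf
  have hflat : f (PF.u j) ++ f (PF.u i) <+ PF.diagWord := by
    have := sublist_flatMap f hrev
    simpa [ParkingFunction.diagWord, hf] using this
  have hmem : ∀ k : Fin N, PF.v k ∈ f (PF.u k) := by
    intro k
    simp only [hf, List.mem_map, List.mem_reverse, List.mem_filter]
    exact ⟨k, ⟨List.mem_finRange k, by simp⟩, rfl⟩
  exact List.Sublist.trans
    ((List.singleton_sublist.2 (hmem j)).append (List.singleton_sublist.2 (hmem i)))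
    hflat

end Aux

/-- if the diagonal word of a parking function on the
`(J+n) × (J+n)` square is a shuffle of `1⋯J` and `(J+1)⋯(J+n)`, then every
column of the supporting Dyck path has length at most 2, and whenever two cars
share a column the lower one is small (`≤ J`) and the upper one is big (`> J`). -/
theorem columns_le_two_of_shuffle (J n : ℕ) (PF : ParkingFunction (J + n))
    (hshuffle : IsShuffle (List.range' 1 J) (List.range' (J + 1) n) PF.diagWord) :
    (∀ c : ℕ, (Finset.univ.filter fun i : Fin (J + n) => PF.col i = c).card ≤ 2) ∧
      (∀ i j : Fin (J + n), (i : ℕ) < (j : ℕ) → PF.col i = PF.col j →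
        PF.v i ≤ J ∧ J < PF.v j) := by
  have hfilters := shuffle_filter hshuffle (fun x => x ≤ J)
    (fun x hx => by simp only [List.mem_range'] at hx; simp; omega)
    (fun x hx => by simp only [List.mem_range'] at hx; simp; omega)
  have hsmall : PF.diagWord.filter (fun x => x ≤ J) = List.range' 1 J := hfilters.1
  have hbig : PF.diagWord.filter (fun x => ! (decide (x ≤ J))) = List.range' (J + 1) n :=
    hfilters.2
  -- main pairwise claim
  have main : ∀ i j : Fin (J + n), (i : ℕ) < (j : ℕ) → PF.col i = PF.col j →
      PF.v i ≤ J ∧ J < PF.v j := by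
    intro i j hij hcol
    obtain ⟨hu, hv⟩ := chain PF ((j : ℕ) - (i : ℕ)) i j (by omega) hcol
    have hvij : PF.v i < PF.v j := hv (by omega)
    have hsub : List.Sublist [PF.v j, PF.v i] PF.diagWord :=
      pair_in_diagWord PF i j (by omega)
    -- not both small
    have hns : ¬ (PF.v j ≤ J ∧ PF.v i ≤ J) := by
      rintro ⟨h1, h2⟩
      have hsl : List.Sublist [PF.v j, PF.v i] (List.range' 1 J) := by
        have h := hsub.filter (fun x => decide (x ≤ J))
        rw [hsmall] at h
        simpa [List.filter_cons, h1, h2] using h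
      have hp : List.Pairwise (· < ·) (List.range' 1 J) := List.pairwise_lt_range' (s := 1) (n := J)
      have := hp.sublist hsl
      simp only [List.pairwise_cons] at this
      have := this.1 (PF.v i) (by simp)
      omega
    have hnb : ¬ (J < PF.v j ∧ J < PF.v i) := by
      rintro ⟨h1, h2⟩
      have hsl : List.Sublist [PF.v j, PF.v i] (List.range' (J + 1) n) := by
        have h := hsub.filter (fun x => ! (decide (x ≤ J)))
        rw [hbig] at h
        simpa [List.filter_cons, Nat.not_le.2 h1, Nat.not_le.2 h2] using h
      have hp : List.Pairwise (· < ·) (List.range' (J + 1) n) :=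
        List.pairwise_lt_range' (s := J + 1) (n := n)
      have := hp.sublist hsl
      simp only [List.pairwise_cons] at this
      have := this.1 (PF.v i) (by simp)
      omega
    constructor <;> omega
  refine ⟨?_, main⟩
  intro c
  by_contra hcard
  push_neg at hcard
  obtain ⟨a, b, cc, ha, hb, hcc, hab, hac, hbc⟩ :=
    Finset.two_lt_card_iff.1 hcard
  simp only [Finset.mem_filter, Finset.mem_univ, true_and] at ha hb hcc
  have noThree : ∀ x y z : Fin (J + n), (x : ℕ) < y → (y : ℕ) < z →
      PF.col x = c → PF.col y = c → PF.col z = c → False := by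
    intro x y z h1 h2 hx hy hz
    have p1 := main x y h1 (by omega)
    have p2 := main y z h2 (by omega)
    omega
  have habv : (a : ℕ) ≠ b := fun h => hab (Fin.ext h)
  have hacv : (a : ℕ) ≠ cc := fun h => hac (Fin.ext h)
  have hbcv : (b : ℕ) ≠ cc := fun h => hbc (Fin.ext h)
  rcases Nat.lt_or_ge (a : ℕ) b with h1 | h1 <;>
    rcases Nat.lt_or_ge (b : ℕ) cc with h2 | h2 <;>
    rcases Nat.lt_or_ge (a : ℕ) cc with h3 | h3
  · exact noThree a b cc h1 h2 ha hb hcc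
  · exact noThree a b cc h1 h2 ha hb hcc
  · exact noThree a cc b h3 (by omega) ha hcc hb
  · exact noThree cc a b (by omega) h1 hcc ha hb
  · exact noThree b a cc (by omega) h3 hb ha hcc
  · exact noThree b cc a h2 (by omega) hb hcc ha
  · exact noThree a cc b h3 (by omega) ha hcc hb
  · exact noThree cc b a (by omega) (by omega) hcc hb ha
end

section
/- Let PF be a parking function in PF(J,n) (diagonal word a shuffle of 12⋯J and (J+1)⋯(J+n), with car J+n in cell (1,1)), with two-line array (V;U). If i_1 < i_2 < ⋯ < i_k are the positions where v_i > J (the big cars), then the vector (u_{i_1}, u_{i_2}, ..., u_{i_k}) satisfies u_{i_1} = 0 and u_{i_s} ≤ u_{i_{s-1}} + 1 for all 2 ≤ s ≤ k; hence it is the area sequence of a Dyck path. -/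
namespace BigCarAux

/-- Totalized area sequence. -/
def Uf {N : ℕ} (PF : ParkingFunction N) (t : ℕ) : ℕ :=
  if h : t < N then PF.u ⟨t, h⟩ else 0

/-- Totalized car sequence. -/
def Vf {N : ℕ} (PF : ParkingFunction N) (t : ℕ) : ℕ :=
  if h : t < N then PF.v ⟨t, h⟩ else 0

theorem Uf_eq {N : ℕ} (PF : ParkingFunction N) (i : Fin N) : Uf PF i = PF.u i := by
  unfold Uf; rw [dif_pos i.isLt]

theorem Vf_eq {N : ℕ} (PF : ParkingFunction N) (i : Fin N) : Vf PF i = PF.v i := by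
  unfold Vf; rw [dif_pos i.isLt]

theorem Uf_zero {N : ℕ} (PF : ParkingFunction N) (h : 0 < N) : Uf PF 0 = 0 := by
  unfold Uf; rw [dif_pos h]; exact PF.u_first h

theorem Uf_step {N : ℕ} (PF : ParkingFunction N) {t : ℕ} (h : t + 1 < N) :
    Uf PF (t + 1) ≤ Uf PF t + 1 := by
  have ht : t < N := by omega
  unfold Uf; rw [dif_pos h, dif_pos ht]
  exact PF.u_step ⟨t, ht⟩ h

theorem Vf_incr {N : ℕ} (PF : ParkingFunction N) {t : ℕ} (h : t + 1 < N)
    (he : Uf PF (t + 1) = Uf PF t + 1) : Vf PF t < Vf PF (t + 1) := by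
  have ht : t < N := by omega
  unfold Uf at he; rw [dif_pos h, dif_pos ht] at he
  unfold Vf; rw [dif_pos h, dif_pos ht]
  exact PF.v_incr ⟨t, ht⟩ h he

theorem Uf_le {N : ℕ} (PF : ParkingFunction N) : ∀ t, t < N → Uf PF t ≤ t := by
  intro t
  induction t with
  | zero => intro h; rw [Uf_zero PF h]
  | succ t ih =>
    intro h
    have h1 := Uf_step PF h
    have h2 := ih (by omega)
    omega

theorem descend (f : ℕ → ℕ) (a : ℕ) :
    ∀ b, a ≤ b → (∀ t, a ≤ t → t < b → f (t + 1) ≤ f t) → f b ≤ f a := by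
  intro b
  induction b with
  | zero =>
    intro hab _
    have : a = 0 := by omega
    rw [this]
  | succ b ih =>
    intro hab H
    rcases Nat.eq_or_lt_of_le hab with h | h
    · rw [← h]
    · have h1 : a ≤ b := by omega
      have h2 := H b h1 (by omega)
      have h3 := ih h1 (fun t ht htb => H t ht (by omega))
      omega

theorem shuffle_filter {a b c : List ℕ} {p : ℕ → Bool} (h : IsShuffle a b c)
    (ha : ∀ x ∈ a, p x = true) (hb : ∀ x ∈ b, p x = false) : c.filter p = a := by
  induction h with
  | nil => rfl
  | @left a b c x h ih =>
    rw [List.filter_cons_of_pos (ha x List.mem_cons_self),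
      ih (fun y hy => ha y (List.mem_cons_of_mem x hy)) hb]
  | @right a b c x h ih =>
    rw [List.filter_cons_of_neg (by simp [hb x List.mem_cons_self])]
    exact ih ha (fun y hy => hb y (List.mem_cons_of_mem x hy))

theorem get_map'' {α β : Type*} (f : α → β) (l : List α) (k : ℕ)
    (h : k < (l.map f).length) (h' : k < l.length) :
    (l.map f).get ⟨k, h⟩ = f (l.get ⟨k, h'⟩) := by
  simp

theorem filter_flatMap' {α β : Type*} (l : List α) (f : α → List β) (p : β → Bool) :
    (l.flatMap f).filter p = l.flatMap fun x => (f x).filter p := by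
  induction l with
  | nil => rfl
  | cons x l ih => simp [List.flatMap_cons, List.filter_append, ih]

/-- Small cars on higher diagonals are smaller. -/
theorem small_sorted {N J : ℕ} (PF : ParkingFunction N)
    (hpw : List.Pairwise (· < ·) (PF.diagWord.filter (fun x => decide (x ≤ J))))
    (p q : Fin N) (hp : PF.v p ≤ J) (hq : PF.v q ≤ J) (hpq : PF.u p < PF.u q) :
    PF.v q < PF.v p := by
  unfold ParkingFunction.diagWord at hpw
  rw [filter_flatMap', List.flatMap_def, List.pairwise_flatten] at hpw
  have h2 := hpw.2
  rw [List.pairwise_map, List.pairwise_reverse, List.pairwise_iff_get] at h2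
  have hqN : PF.u q < N := by
    have h1 : Uf PF (q : ℕ) ≤ (q : ℕ) := Uf_le PF _ q.isLt
    rw [Uf_eq] at h1
    exact lt_of_le_of_lt h1 q.isLt
  have hpN : PF.u p < N := lt_trans hpq hqN
  have key := h2 ⟨PF.u p, by simpa using hpN⟩ ⟨PF.u q, by simpa using hqN⟩
    (by simpa [Fin.lt_def] using hpq)
  simp only [List.get_eq_getElem, List.getElem_range] at key
  refine key (PF.v q) ?_ (PF.v p) ?_
  · rw [List.mem_filter]
    refine ⟨List.mem_map.mpr ⟨q, ?_, rfl⟩, by simpa using hq⟩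
    rw [List.mem_reverse, List.mem_filter]
    exact ⟨List.mem_finRange q, by simp⟩
  · rw [List.mem_filter]
    refine ⟨List.mem_map.mpr ⟨p, ?_, rfl⟩, by simpa using hp⟩
    rw [List.mem_reverse, List.mem_filter]
    exact ⟨List.mem_finRange p, by simp⟩

/-- Core step: consecutive big positions have area increase at most one. -/
theorem core {N J : ℕ} (PF : ParkingFunction N)
    (hsort : ∀ p q : Fin N, PF.v p ≤ J → PF.v q ≤ J → PF.u p < PF.u q → PF.v q < PF.v p)
    (i j : Fin N) (hij : (i : ℕ) < (j : ℕ)) (hvi : J < PF.v i)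
    (hbet : ∀ t : Fin N, (i : ℕ) < (t : ℕ) → (t : ℕ) < (j : ℕ) → PF.v t ≤ J) :
    PF.u j ≤ PF.u i + 1 := by
  by_contra hcon
  push_neg at hcon
  rw [← Uf_eq PF i, ← Uf_eq PF j] at hcon
  set a := (i : ℕ) with ha
  set b := (j : ℕ) with hb
  have hbN : b < N := j.isLt
  have hane : a + 1 < b := by
    by_contra h
    have heq : b = a + 1 := by omega
    have hstep := Uf_step PF (t := a) (by omega)
    rw [← heq] at hstep
    omega
  have hstepb : Uf PF b ≤ Uf PF (b - 1) + 1 := by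
    have e : b - 1 + 1 = b := by omega
    rw [← e]
    exact Uf_step PF (by omega)
  rcases Nat.lt_or_ge (Uf PF a) (Uf PF (a + 1)) with hrise | hdesc
  · -- rise right after i : forces v i < v (i+1), impossible since v i big
    have hstep := Uf_step PF (t := a) (by omega)
    have heq : Uf PF (a + 1) = Uf PF a + 1 := by omega
    have hv := Vf_incr PF (by omega) heq
    have hva : Vf PF a = PF.v i := by
      rw [ha]; exact Vf_eq PF i
    have hsmall : PF.v ⟨a + 1, by omega⟩ ≤ J :=
      hbet ⟨a + 1, by omega⟩ (by show a < a + 1; omega) (by show a + 1 < b; omega)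
    have hvb : Vf PF (a + 1) = PF.v ⟨a + 1, by omega⟩ := Vf_eq PF ⟨a + 1, by omega⟩
    omega
  · -- otherwise a rise happens strictly between small cars
    have hex : ¬ ∀ t, a + 1 ≤ t → t < b - 1 → Uf PF (t + 1) ≤ Uf PF t := by
      intro H
      have := descend (Uf PF) (a + 1) (b - 1) (by omega) H
      omega
    push_neg at hex
    obtain ⟨t, ht1, ht2, ht3⟩ := hex
    have htN : t + 1 < N := by omega
    have hstep := Uf_step PF (t := t) htN
    have heq : Uf PF (t + 1) = Uf PF t + 1 := by omega
    have hv := Vf_incr PF htN heq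
    have hs1 : PF.v ⟨t, by omega⟩ ≤ J :=
      hbet ⟨t, by omega⟩ (by show a < t; omega) (by show t < b; omega)
    have hs2 : PF.v ⟨t + 1, htN⟩ ≤ J :=
      hbet ⟨t + 1, htN⟩ (by show a < t + 1; omega) (by show t + 1 < b; omega)
    have hu1 : Uf PF t = PF.u ⟨t, by omega⟩ := Uf_eq PF ⟨t, by omega⟩
    have hu2 : Uf PF (t + 1) = PF.u ⟨t + 1, htN⟩ := Uf_eq PF ⟨t + 1, htN⟩
    have hso := hsort ⟨t, by omega⟩ ⟨t + 1, htN⟩ hs1 hs2 (by omega)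
    have hv1 : Vf PF t = PF.v ⟨t, by omega⟩ := Vf_eq PF ⟨t, by omega⟩
    have hv2 : Vf PF (t + 1) = PF.v ⟨t + 1, htN⟩ := Vf_eq PF ⟨t + 1, htN⟩
    omega

end BigCarAux

open BigCarAux in
set_option maxHeartbeats 1000000 in
/-- let `PF ∈ 𝒫ℱ(J,n)`: a parking function on the
`(J+n) × (J+n)` square whose diagonal word is a shuffle of `1⋯J` and
`(J+1)⋯(J+n)` and whose first car (the one in cell `(1,1)`) is `J+n`.  Then the
subsequence of area numbers at the positions of the big cars (`> J`) starts with
`0` and increases by at most `1` at each step; hence it is the area sequence of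
a Dyck path, the Dyck path supporting the big cars of `PF`. -/
theorem big_car_area_sequence (J n : ℕ) (hn : 0 < n)
    (PF : ParkingFunction (J + n))
    (hshuffle : IsShuffle (List.range' 1 J) (List.range' (J + 1) n) PF.diagWord)
    (hfirst : PF.v ⟨0, by omega⟩ = J + n) :
    ∀ ub : List ℕ,
      ub = (((List.finRange (J + n)).filter fun i => J < PF.v i).map PF.u) →
      (∀ h : 0 < ub.length, ub.get ⟨0, h⟩ = 0) ∧
        (∀ s : ℕ, ∀ h : s + 1 < ub.length,
          ub.get ⟨s + 1, h⟩ ≤ ub.get ⟨s, Nat.lt_of_succ_lt h⟩ + 1) := by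
  intro ub hub
  subst hub
  have hfil : PF.diagWord.filter (fun x => decide (x ≤ J)) = List.range' 1 J :=
    shuffle_filter hshuffle
      (fun x hx => by rw [List.mem_range'_1] at hx; simp; omega)
      (fun x hx => by rw [List.mem_range'_1] at hx; simp; omega)
  have hpw : List.Pairwise (· < ·) (PF.diagWord.filter fun x => decide (x ≤ J)) := by
    rw [hfil]; exact List.pairwise_lt_range' (s := 1) (n := J)
  have hsort : ∀ p q : Fin (J + n), PF.v p ≤ J → PF.v q ≤ J →
      PF.u p < PF.u q → PF.v q < PF.v p :=
    fun p q hp hq hpq => small_sorted PF hpw p q hp hq hpq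
  set L := (List.finRange (J + n)).filter (fun i => J < PF.v i) with hL
  have hLpw : L.Pairwise (· < ·) :=
    List.Pairwise.sublist List.filter_sublist (List.pairwise_lt_finRange _)
  have hgetlt := List.pairwise_iff_get.mp hLpw
  constructor
  · intro h
    have hlen : 0 < L.length := by simpa using h
    have h0mem : (⟨0, by omega⟩ : Fin (J + n)) ∈ L :=
      List.mem_filter.mpr ⟨List.mem_finRange _, by
        simp only [decide_eq_true_eq]; rw [hfirst]; omega⟩
    obtain ⟨r, hr⟩ := List.mem_iff_get.mp h0mem
    have hget : L.get ⟨0, hlen⟩ = (⟨0, by omega⟩ : Fin (J + n)) := by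
      rcases Nat.eq_zero_or_pos (r : ℕ) with h' | h'
      · rw [← hr]; congr 1; exact Fin.ext h'.symm
      · exfalso
        have hlt := hgetlt ⟨0, hlen⟩ r (by simpa [Fin.lt_def] using h')
        rw [hr] at hlt
        exact absurd hlt (by simp [Fin.lt_def])
    simp only [List.get_eq_getElem, List.getElem_map]
    have : L[(0 : ℕ)]'(hlen) = L.get ⟨0, hlen⟩ := rfl
    rw [this, hget]
    exact PF.u_first _
  · intro s h
    have hlen : s + 1 < L.length := by
      have := h; rw [List.length_map] at this; exact this
    have hs' : s < L.length := by omega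
    rw [get_map'' PF.u L (s + 1) h hlen, get_map'' PF.u L s (Nat.lt_of_succ_lt h) hs']
    have hij : L.get ⟨s, hs'⟩ < L.get ⟨s + 1, hlen⟩ :=
      hgetlt ⟨s, hs'⟩ ⟨s + 1, hlen⟩ (Nat.lt_succ_self s)
    have hbig_i : J < PF.v (L.get ⟨s, hs'⟩) := by
      have hm : L.get ⟨s, hs'⟩ ∈ L := List.get_mem L ⟨s, hs'⟩
      have hm2 := (List.mem_filter.mp hm).2
      simpa using hm2
    have hbet : ∀ t : Fin (J + n), ((L.get ⟨s, hs'⟩ : Fin (J + n)) : ℕ) < (t : ℕ) →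
        (t : ℕ) < ((L.get ⟨s + 1, hlen⟩ : Fin (J + n)) : ℕ) → PF.v t ≤ J := by
      intro t hit htj
      by_contra hJt
      push_neg at hJt
      have htm : t ∈ L :=
        List.mem_filter.mpr ⟨List.mem_finRange _, by simpa using hJt⟩
      obtain ⟨r, hr⟩ := List.mem_iff_get.mp htm
      have h1 : s < (r : ℕ) := by
        rcases Nat.lt_trichotomy s (r : ℕ) with h' | h' | h'
        · exact h'
        · exfalso
          have : L.get ⟨s, hs'⟩ = t := by rw [← hr]; congr 1; exact Fin.ext h'
          rw [this] at hit; exact lt_irrefl _ hit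
        · exfalso
          have hlt := hgetlt r ⟨s, hs'⟩ h'
          rw [hr] at hlt
          have : (t : ℕ) < ((L.get ⟨s, hs'⟩ : Fin (J + n)) : ℕ) := hlt
          omega
      have h2 : (r : ℕ) < s + 1 := by
        rcases Nat.lt_trichotomy (r : ℕ) (s + 1) with h' | h' | h'
        · exact h'
        · exfalso
          have : L.get ⟨s + 1, hlen⟩ = t := by rw [← hr]; congr 1; exact Fin.ext h'.symm
          rw [this] at htj; exact lt_irrefl _ htj
        · exfalso
          have hlt := hgetlt ⟨s + 1, hlen⟩ r h'
          rw [hr] at hlt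
          have : ((L.get ⟨s + 1, hlen⟩ : Fin (J + n)) : ℕ) < (t : ℕ) := hlt
          omega
      omega
    exact core PF hsort (L.get ⟨s, hs'⟩) (L.get ⟨s + 1, hlen⟩) hij hbig_i hbet
end
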